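/- arXiv:2509.20035 — 5 statements merged into one kernel-verified Lean document; each statement's English description precedes it below -/
import Mathlib

section
/- Let G be a group which satisfies a mixed identity and is not of finite exponent (there is no positive integer N with g^N = 1 for all g ∈ G). Let Ĝ be a group containing G as a subgroup and generated by G together with elements ĝ₁,…,ĝ_ℓ, and suppose Ĝ arises as a limit over G in the following sense: there exist tuples (g_{n,1},…,g_{n,ℓ}) ∈ G^ℓ (n ∈ ℕ) such that for every element u of the free product G ∗ F_ℓ (F_ℓ free of rank ℓ), u evaluates to 1 at (ĝ₁,…,ĝ_ℓ) in Ĝ (via the homomorphism G ∗ F_ℓ → Ĝ restricting to the inclusion on G and sending the i-th free generator to ĝ_i) if and only if u evaluates to 1 at (g_{n,1},…,g_{n,ℓ}) in G for all sufficiently large n. Then for every subgroup K ≤ Ĝ which is not of finite exponent, Ĝ is not the internal free product of G and K; i.e., the canonical homomorphism G ∗ K → Ĝ induced by the two inclusions is not an isomorphism. -/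
open Filter

noncomputable section

variable {G : Type*} [Group G]

/-- Evaluation of a word with constants in `G` and `ℓ` variables (an element of the free
product `G ∗ F_ℓ`) at a tuple from `G`: the homomorphism `G ∗ F_ℓ → G` which is the identity
on `G` and sends the `i`-th free generator to `g i`. -/
def evalWord {ℓ : ℕ} (g : Fin ℓ → G) :
    Monoid.Coprod G (FreeGroup (Fin ℓ)) →* G :=
  Monoid.Coprod.lift (MonoidHom.id G) (FreeGroup.lift g)

/-- A mixed identity (law with constants) for `G`: a word `w ∈ G ∗ F_ℓ` not lying in the free
factor `G` which evaluates to `1` at every tuple from `G^ℓ`. -/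
def HasMixedIdentity (G : Type*) [Group G] : Prop :=
  ∃ (ℓ : ℕ) (w : Monoid.Coprod G (FreeGroup (Fin ℓ))),
    w ∉ (Monoid.Coprod.inl : G →* Monoid.Coprod G (FreeGroup (Fin ℓ))).range ∧
      ∀ g : Fin ℓ → G, evalWord g w = 1

/-- A group has finite exponent if some positive power kills every element. -/
def FiniteExponent (G : Type*) [Group G] : Prop :=
  ∃ N : ℕ, 0 < N ∧ ∀ g : G, g ^ N = 1


set_option linter.unusedSectionVars false

namespace MixedAux

open Monoid Monoid.CoprodI

universe u v

variable {A B : Type u} [Group A] [Group B]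

abbrev Fam (A B : Type u) : Bool → Type u
  | true => A
  | false => B

instance famGroup : ∀ b, Group (Fam A B b)
  | true => ‹Group A›
  | false => ‹Group B›

def famRec {P : Type v} [Monoid P] (f : A →* P) (g : B →* P) : ∀ b, Fam A B b →* P
  | true => f
  | false => g

abbrev Q (A B : Type u) [Group A] [Group B] := CoprodI (Fam A B)

def ofA : A →* Q A B := @CoprodI.of Bool (Fam A B) _ true
def ofB : B →* Q A B := @CoprodI.of Bool (Fam A B) _ false

abbrev lA (x : A) : Σ b, Fam A B b := ⟨true, x⟩
abbrev lB (y : B) : Σ b, Fam A B b := ⟨false, y⟩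

def lprod (l : List (Σ b, Fam A B b)) : Q A B := (l.map fun p => CoprodI.of p.2).prod

lemma lprod_nil : lprod ([] : List (Σ b, Fam A B b)) = 1 := rfl

lemma lprod_cons (p : Σ b, Fam A B b) (l : List (Σ b, Fam A B b)) :
    lprod (p :: l) = CoprodI.of p.2 * lprod l := by simp [lprod]

lemma lprod_append (l₁ l₂ : List (Σ b, Fam A B b)) :
    lprod (l₁ ++ l₂) = lprod l₁ * lprod l₂ := by simp [lprod]

lemma lprod_lA (x : A) (l : List (Σ b, Fam A B b)) :
    lprod (lA x :: l) = ofA x * lprod l := lprod_cons _ _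

lemma lprod_lB (y : B) (l : List (Σ b, Fam A B b)) :
    lprod (lB y :: l) = ofB y * lprod l := lprod_cons _ _

def pushK (y : B) : List (Σ b, Fam A B b) → List (Σ b, Fam A B b)
  | ⟨false, z⟩ :: tl => lB (y * z) :: tl
  | l => lB y :: l

lemma pushK_nil (y : B) : pushK y ([] : List (Σ b, Fam A B b)) = [lB y] := rfl

lemma pushK_lB (y z : B) (tl : List (Σ b, Fam A B b)) :
    pushK y (lB z :: tl) = lB (y * z) :: tl := rfl

lemma lprod_pushK (y : B) (l : List (Σ b, Fam A B b)) :
    lprod (pushK y l) = ofB y * lprod l := by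
  match l with
  | [] => simp [pushK_nil, lprod_lB]
  | ⟨false, z⟩ :: tl =>
      rw [show (⟨false, z⟩ : Σ b, Fam A B b) = lB z from rfl, pushK_lB, lprod_lB, lprod_lB,
        map_mul, mul_assoc]
  | ⟨true, z⟩ :: tl =>
      rw [show pushK y (⟨true, z⟩ :: tl) = lB y :: ⟨true, z⟩ :: tl from rfl, lprod_lB]


/-! ### the substitution -/

def fexp {m : ℕ} (p : Fin m × Bool) : ℤ := cond p.2 ((p.1 : ℤ) + 1) (-((p.1 : ℤ) + 1))

def xe (x : A) (s : Bool) : A := cond s x x⁻¹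

def tQ (x : A) (k : B) {m : ℕ} (i : Fin m) : Q A B :=
  ofB (k ^ ((i : ℤ) + 1)) * ofA x * ofB (k ^ ((i : ℤ) + 1))

lemma fexp_true {m : ℕ} (i : Fin m) : fexp (i, true) = (i : ℤ) + 1 := rfl
lemma fexp_false {m : ℕ} (i : Fin m) : fexp (i, false) = -((i : ℤ) + 1) := rfl

lemma abs_fexp {m : ℕ} (p : Fin m × Bool) : |fexp p| = (p.1 : ℤ) + 1 := by
  rcases p with ⟨i, s⟩
  have : (0:ℤ) ≤ (i : ℤ) + 1 := by positivity
  cases s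
  · rw [fexp_false, abs_neg, abs_of_nonneg this]
  · rw [fexp_true, abs_of_nonneg this]

lemma fexp_ne_zero {m : ℕ} (p : Fin m × Bool) : fexp p ≠ 0 := by
  intro h
  have := abs_fexp p
  rw [h, abs_zero] at this
  have : (0:ℤ) ≤ (p.1 : ℤ) := by positivity
  omega

lemma abs_fexp_le {m : ℕ} (p : Fin m × Bool) : |fexp p| ≤ (m : ℤ) := by
  rw [abs_fexp]
  have := p.1.is_lt
  omega

/-- Non-cancelling adjacent pair in a free group word. -/
def NC {m : ℕ} (p q : Fin m × Bool) : Prop := ¬ (p.1 = q.1 ∧ q.2 = !p.2)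

lemma fexp_add_ne_zero {m : ℕ} {p q : Fin m × Bool} (h : NC p q) : fexp p + fexp q ≠ 0 := by
  rcases p with ⟨i, s⟩; rcases q with ⟨j, s'⟩
  have hi := i.is_lt; have hj := j.is_lt
  cases s <;> cases s'
  · rw [fexp_false, fexp_false]; omega
  · have hij : i ≠ j := by
      intro hij; exact h ⟨hij, rfl⟩
    have : (i : ℤ) ≠ (j : ℤ) := by exact_mod_cast fun hh => hij (Fin.ext (by exact_mod_cast hh))
    rw [fexp_false, fexp_true]; omega
  · have hij : i ≠ j := by
      intro hij; exact h ⟨hij, rfl⟩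
    have : (i : ℤ) ≠ (j : ℤ) := by exact_mod_cast fun hh => hij (Fin.ext (by exact_mod_cast hh))
    rw [fexp_false, fexp_true]; omega
  · rw [fexp_true, fexp_true]; omega

def evalL (x : A) (k : B) {m : ℕ} : List (Fin m × Bool) → List (Σ b, Fam A B b)
  | [] => []
  | p :: L => lB (k ^ fexp p) :: lA (xe x p.2) :: pushK (k ^ fexp p) (evalL x k L)

lemma evalL_cons (x : A) (k : B) {m : ℕ} (p : Fin m × Bool) (L : List (Fin m × Bool)) :
    evalL x k (p :: L) =
      lB (k ^ fexp p) :: lA (xe x p.2) :: pushK (k ^ fexp p) (evalL x k L) := rfl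

lemma cond_tQ (x : A) (k : B) {m : ℕ} (p : Fin m × Bool) :
    cond p.2 (tQ x k p.1) (tQ x k p.1)⁻¹ =
      ofB (k ^ fexp p) * ofA (xe x p.2) * ofB (k ^ fexp p) := by
  rcases p with ⟨i, s⟩
  cases s
  · show (tQ x k i)⁻¹ = _
    rw [tQ, fexp_false]
    simp [xe, mul_inv_rev, ← map_inv, ← zpow_neg, mul_assoc]
  · rfl

lemma evalL_spec (x : A) (k : B) {m : ℕ} (hx : x ≠ 1)
    (hk : ∀ z : ℤ, z ≠ 0 → |z| ≤ 2 * (m : ℤ) → k ^ z ≠ 1) :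
    ∀ L : List (Fin m × Bool), L.Chain' NC →
      (∀ y ∈ evalL x k L, y.2 ≠ 1) ∧
      (evalL x k L).Chain' (fun p q => p.1 ≠ q.1) ∧
      (∀ y ∈ (evalL x k L).getLast?, y.1 = false) ∧
      lprod (evalL (B := B) x k L) =
        (L.map fun p => cond p.2 (tQ x k p.1) (tQ x k p.1)⁻¹).prod := by
  have hkf : ∀ p : Fin m × Bool, k ^ fexp p ≠ 1 := fun p =>
    hk _ (fexp_ne_zero p) (le_trans (abs_fexp_le p) (by omega))
  have hxe : ∀ s, xe x s ≠ 1 := fun s => by cases s <;> simp [xe, hx]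
  intro L
  induction L with
  | nil => intro _; exact ⟨by simp [evalL], by simp [evalL, List.Chain'], by simp [evalL], by
      simp [evalL, lprod_nil]⟩
  | cons p L ih =>
    intro hch
    cases L with
    | nil =>
      refine ⟨?_, ?_, ?_, ?_⟩
      · intro y hy
        simp only [evalL_cons, pushK_nil, evalL, List.mem_cons, List.mem_singleton,
          List.not_mem_nil, or_false] at hy
        rcases hy with rfl | rfl | rfl
        · exact hkf p
        · exact hxe p.2
        · exact hkf p
      · simp [evalL_cons, pushK_nil, evalL, List.Chain', List.isChain_cons_cons, lA, lB]
      · intro y hy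
        simp only [evalL_cons, pushK_nil, evalL, List.getLast?_cons_cons,
          List.getLast?_singleton, Option.mem_def, Option.some_inj] at hy
        subst hy; rfl
      · show lprod (lB (k ^ fexp p) :: lA (xe x p.2) :: [lB (k ^ fexp p)]) = _
        rw [lprod_lB, lprod_lA, lprod_lB, lprod_nil, List.map_cons, List.map_nil,
          List.prod_cons, List.prod_nil, cond_tQ]
        simp [mul_assoc]
    | cons q L' =>
      obtain ⟨hpq, hch'⟩ := List.isChain_cons_cons.mp hch
      obtain ⟨ih1, ih2, ih3, ih4⟩ := ih hch'
      set P := pushK (k ^ fexp q) (evalL (B := B) x k L') with hP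
      set tail2 := lA (xe x q.2) :: P with htail2
      have hshape : evalL x k (q :: L') = lB (k ^ fexp q) :: tail2 := rfl
      have hfull : evalL x k (p :: q :: L') =
          lB (k ^ fexp p) :: lA (xe x p.2) :: lB (k ^ (fexp p + fexp q)) :: tail2 := by
        rw [evalL_cons, hshape, pushK_lB, ← zpow_add]
      have hkpq : k ^ (fexp p + fexp q) ≠ 1 := by
        refine hk _ (fexp_add_ne_zero hpq) ?_
        have h1 := abs_fexp_le p; have h2 := abs_fexp_le q
        have h3 := abs_add_le (fexp p) (fexp q)
        omega
      refine ⟨?_, ?_, ?_, ?_⟩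
      · intro y hy
        rw [hfull] at hy
        rcases List.mem_cons.mp hy with rfl | hy
        · exact hkf p
        rcases List.mem_cons.mp hy with rfl | hy
        · exact hxe p.2
        rcases List.mem_cons.mp hy with rfl | hy
        · exact hkpq
        · exact ih1 y (by rw [hshape]; exact List.mem_cons_of_mem _ hy)
      · rw [hfull]
        have htl : tail2.Chain' (fun p q => p.1 ≠ q.1) ∧
            (∀ y ∈ tail2.head?, (false : Bool) ≠ y.1) := by
          rw [hshape] at ih2
          obtain ⟨h1, h2⟩ := List.isChain_cons.mp ih2
          exact ⟨h2, fun y hy => h1 y hy⟩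
        refine List.isChain_cons_cons.mpr ⟨by simp [lA, lB], List.isChain_cons_cons.mpr
          ⟨by simp [lA, lB], List.isChain_cons.mpr ⟨htl.2, htl.1⟩⟩⟩
      · intro y hy
        apply ih3 y
        rw [hshape, htail2]
        rw [hfull, htail2] at hy
        simpa only [List.getLast?_cons_cons] using hy
      · rw [hfull, lprod_lB, lprod_lA, lprod_lB, List.map_cons, List.prod_cons, cond_tQ,
          ← ih4, hshape, lprod_lB, zpow_add, map_mul]
        simp [mul_assoc]

lemma chain'_NC_toWord {m : ℕ} (u : FreeGroup (Fin m)) : u.toWord.Chain' NC := by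
  have hnc : ∀ (L₂ : List (Fin m × Bool)) (y : Fin m) (b : Bool) L₃,
      u.toWord ≠ L₂ ++ (y, b) :: (y, !b) :: L₃ := by
    intro L₂ y b L₃ h
    exact FreeGroup.reduce.not (L₁ := u.toWord) (x := y) (b := b)
      (by rw [FreeGroup.reduce_toWord]; exact h)
  generalize u.toWord = L at hnc ⊢
  induction L with
  | nil => exact List.isChain_nil
  | cons p L ih =>
    cases L with
    | nil => exact List.isChain_singleton p
    | cons q L' =>
      refine List.isChain_cons_cons.mpr ⟨?_, ?_⟩
      · rintro ⟨h1, h2⟩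
        refine hnc [] p.1 p.2 L' ?_
        have : q = (p.1, !p.2) := Prod.ext h1.symm h2
        simp [this]
      · exact ih (fun L₂ y b L₃ h => hnc (p :: L₂) y b L₃ (by rw [h]; rfl))

lemma exists_word (x : A) (k : B) {m : ℕ} (hx : x ≠ 1)
    (hk : ∀ z : ℤ, z ≠ 0 → |z| ≤ 2 * (m : ℤ) → k ^ z ≠ 1)
    (u : FreeGroup (Fin m)) (hu : u ≠ 1) :
    ∃ v : Word (Fam A B), v.prod = FreeGroup.lift (tQ x k) u ∧ v.fstIdx = some false ∧
      (∀ y ∈ v.toList.getLast?, y.1 = false) ∧ v.toList ≠ [] := by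
  obtain ⟨h1, h2, h3, h4⟩ := evalL_spec x k hx hk u.toWord (chain'_NC_toWord u)
  refine ⟨⟨evalL x k u.toWord, h1, h2⟩, ?_, ?_, h3, ?_⟩
  · show lprod (evalL x k u.toWord) = _
    rw [h4]
    conv_rhs => rw [← FreeGroup.mk_toWord (x := u)]
    rw [FreeGroup.lift_mk]
  · show (evalL x k u.toWord).head?.map Sigma.fst = some false
    obtain ⟨p, L, hL⟩ : ∃ p L, u.toWord = p :: L := by
      cases hL : u.toWord with
      | nil => exact absurd (FreeGroup.toWord_eq_nil_iff.mp hL) hu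
      | cons p L => exact ⟨p, L, rfl⟩
    rw [hL, evalL_cons]; rfl
  · show evalL x k u.toWord ≠ []
    obtain ⟨p, L, hL⟩ : ∃ p L, u.toWord = p :: L := by
      cases hL : u.toWord with
      | nil => exact absurd (FreeGroup.toWord_eq_nil_iff.mp hL) hu
      | cons p L => exact ⟨p, L, rfl⟩
    rw [hL, evalL_cons]; simp

lemma word_prod_injective :
    Function.Injective (Word.prod : Word (Fam A B) → Q A B) := by
  classical
  intro v w h
  exact (Word.equiv (M := Fam A B)).symm.injective h

open Pointwise in
theorem core_injective {m : ℕ} (x : A) (hx2 : x * x ≠ 1) (k : B) (hk1 : k ≠ 1)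
    (hk : ∀ z : ℤ, z ≠ 0 → |z| ≤ 2 * (m : ℤ) → k ^ z ≠ 1) :
    Function.Injective
      (Coprod.lift (ofA (B := B)) (FreeGroup.lift (tQ x k)) :
        Coprod A (FreeGroup (Fin m)) →* Q A B) := by
  classical
  have hx : x ≠ 1 := fun h => hx2 (by rw [h, one_mul])
  have hxx : x ≠ x * x := fun h => hx (mul_left_cancel (a := x) (by rw [mul_one, ← h])).symm
  set F : Type u := ULift.{u} (FreeGroup (Fin m)) with hF
  set fH : ∀ b, Fam A F b →* Q A B :=
    famRec (ofA) ((FreeGroup.lift (tQ x k)).comp (MulEquiv.ulift.toMonoidHom)) with hfH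
  set X : Bool → Set (Q A B) :=
    fun b => {q | ∃ v : Word (Fam A B), v.prod = q ∧ v.fstIdx = some b} with hX
  have hinj1 : Function.Injective (CoprodI.lift fH) := by
    apply CoprodI.lift_injective_of_ping_pong fH ?hcard X ?hne ?hdisj ?hpp
    case hcard =>
      refine Or.inr ⟨true, ?_⟩
      show (3 : Cardinal) ≤ Cardinal.mk A
      have hf3 : Function.Injective (![1, x, x * x] : Fin 3 → A) := by
        intro a b hab
        fin_cases a <;> fin_cases b <;> simp_all
      have hf3' : Function.Injective ((![1, x, x * x] : Fin 3 → A) ∘ ULift.down.{u}) :=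
        hf3.comp ULift.down_injective
      have := Cardinal.mk_le_of_injective hf3'
      simpa using this
    case hne =>
      intro b
      cases b
      · refine ⟨Word.prod ⟨[lB k], ?_, List.isChain_singleton _⟩, ⟨_, rfl, rfl⟩⟩
        intro y hy; rw [List.mem_singleton] at hy; subst hy; exact hk1
      · refine ⟨Word.prod ⟨[lA x], ?_, List.isChain_singleton _⟩, ⟨_, rfl, rfl⟩⟩
        intro y hy; rw [List.mem_singleton] at hy; subst hy; exact hx
    case hdisj =>
      intro b b' hbb'
      rw [Function.onFun]
      rw [Set.disjoint_left]
      rintro q ⟨v, rfl, hv⟩ ⟨v', hv'1, hv'2⟩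
      have hvv : v' = v := word_prod_injective hv'1
      rw [hvv, hv] at hv'2
      exact hbb' (Option.some_injective _ hv'2)
    case hpp =>
      intro b b' hbb'
      cases b <;> cases b'
      · exact absurd rfl hbb'
      · -- b = false (free group side), b' = true
        intro h hne1 q hq
        rw [Set.mem_smul_set] at hq
        obtain ⟨r, hr, rfl⟩ := hq
        obtain ⟨v', rfl, hv'f⟩ := hr
        set u0 : FreeGroup (Fin m) := MulEquiv.ulift (h : F) with hu0def
        have hu0 : u0 ≠ 1 := by
          intro he
          apply hne1
          have : (h : F).down = 1 := he
          exact ULift.ext _ _ this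
        obtain ⟨v, hvprod, hvfst, hvlast, hvne⟩ := exists_word x k hx hk u0 hu0
        have hjun : ∀ y ∈ v.toList.getLast?, ∀ z ∈ v'.toList.head?,
            (Sigma.fst y) ≠ (Sigma.fst z) := by
          intro y hy z hz
          have h1 : y.1 = false := hvlast y hy
          have h2 : z.1 = true := by
            have h2' : v'.toList.head?.map Sigma.fst = some true := hv'f
            rw [hz] at h2'
            simpa using h2'
          rw [h1, h2]; simp
        refine ⟨⟨v.toList ++ v'.toList, ?_, ?_⟩, ?_, ?_⟩
        · intro y hy
          rcases List.mem_append.mp hy with hy | hy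
          · exact v.ne_one y hy
          · exact v'.ne_one y hy
        · exact List.isChain_append.mpr ⟨v.chain_ne, v'.chain_ne, hjun⟩
        · show lprod (v.toList ++ v'.toList) = fH false h • Word.prod v'
          rw [lprod_append, smul_eq_mul]
          have h1 : lprod v.toList = FreeGroup.lift (tQ x k) u0 := hvprod
          rw [h1]
          rfl
        · show (v.toList ++ v'.toList).head?.map Sigma.fst = some false
          cases hlist : v.toList with
          | nil => exact absurd hlist hvne
          | cons a l =>
            have ha : a.1 = false := by
              have h2' : v.toList.head?.map Sigma.fst = some false := hvfst
              rw [hlist] at h2'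
              simpa using h2'
            simp [ha]
      · -- b = true (A side), b' = false
        intro h hne1 q hq
        rw [Set.mem_smul_set] at hq
        obtain ⟨r, hr, rfl⟩ := hq
        obtain ⟨v, rfl, hvf⟩ := hr
        refine ⟨⟨(⟨true, (show A from h)⟩ : Σ b, Fam A B b) :: v.toList, ?_, ?_⟩, ?_, rfl⟩
        · intro y hy
          rcases List.mem_cons.mp hy with rfl | hy
          · exact hne1
          · exact v.ne_one y hy
        · refine List.isChain_cons.mpr ⟨?_, v.chain_ne⟩
          intro y hy
          have hyf : y.1 = false := by
            have h2' : v.toList.head?.map Sigma.fst = some false := hvf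
            rw [hy] at h2'
            simpa using h2'
          rw [hyf]; simp
        · show lprod ((⟨true, (show A from h)⟩ : Σ b, Fam A B b) :: v.toList) =
              fH true h • Word.prod v
          rw [lprod_cons, smul_eq_mul]
          rfl
      · exact absurd rfl hbb'
  -- now transfer to the binary coproduct
  set upF : FreeGroup (Fin m) →* F := MulEquiv.ulift.symm.toMonoidHom with hupF
  set jmap : Coprod A (FreeGroup (Fin m)) →* CoprodI (Fam A F) :=
    Coprod.lift (@CoprodI.of Bool (Fam A F) _ true)
      ((@CoprodI.of Bool (Fam A F) _ false).comp upF) with hjmap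
  have hj : Function.Injective jmap := by
    set ρ : CoprodI (Fam A F) →* Coprod A (FreeGroup (Fin m)) :=
      CoprodI.lift (famRec (Coprod.inl) ((Coprod.inr).comp MulEquiv.ulift.toMonoidHom)) with hρ
    have hcomp : ρ.comp jmap = MonoidHom.id _ := by
      apply Coprod.hom_ext
      · ext a
        simp [hjmap, hρ, CoprodI.lift_of, famRec]
      · apply FreeGroup.ext_hom
        intro i
        simp [hjmap, hρ, CoprodI.lift_of, famRec, hupF]
    have hli : Function.LeftInverse ρ jmap := fun y => by
      rw [← MonoidHom.comp_apply, hcomp, MonoidHom.id_apply]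
    exact hli.injective
  have heq : (CoprodI.lift fH).comp jmap =
      Coprod.lift (ofA (B := B)) (FreeGroup.lift (tQ x k)) := by
    apply Coprod.hom_ext
    · ext a
      simp [hjmap, hfH, CoprodI.lift_of, famRec, ofA]
    · apply FreeGroup.ext_hom
      intro i
      simp [hjmap, hfH, CoprodI.lift_of, famRec, hupF]
  rw [← heq, MonoidHom.coe_comp]
  exact hinj1.comp hj

end MixedAux

open Monoid MixedAux in
theorem limit_aux.{u1, u2} {G₀ : Type u1} [Group G₀]
    (hmix : HasMixedIdentity G₀) (hexp : ¬ FiniteExponent G₀)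
    {Ghat : Type u2} [Group Ghat] (ι : G₀ →* Ghat) (hι : Function.Injective ι)
    {ℓ : ℕ} (ghat : Fin ℓ → Ghat)
    (hgen : Subgroup.closure (Set.range ι ∪ Set.range ghat) = ⊤)
    (g : ℕ → Fin ℓ → G₀)
    (hlim : ∀ u : Monoid.Coprod G₀ (FreeGroup (Fin ℓ)),
      Monoid.Coprod.lift ι (FreeGroup.lift ghat) u = 1 ↔
        ∀ᶠ n in Filter.atTop, evalWord (g n) u = 1)
    (K : Subgroup Ghat) (hK : ¬ ∃ N : ℕ, 0 < N ∧ ∀ k ∈ K, k ^ N = 1) :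
    ¬ Function.Bijective (Monoid.Coprod.lift ι K.subtype) := by
  intro hbij
  obtain ⟨m, w, hwr, hwid⟩ := hmix
  -- an element of G₀ with x * x ≠ 1
  have hexp' : ∀ N : ℕ, 0 < N → ∃ g0 : G₀, g0 ^ N ≠ 1 := by
    intro N hN
    by_contra hcon
    push_neg at hcon
    exact hexp ⟨N, hN, hcon⟩
  obtain ⟨x, hx2⟩ := hexp' 2 two_pos
  have hxx2 : x * x ≠ 1 := by rwa [pow_two] at hx2
  -- an element of K of large order
  have hK' : ∀ N : ℕ, 0 < N → ∃ k0 : ↥K, k0 ^ N ≠ 1 := by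
    intro N hN
    by_contra hcon
    push_neg at hcon
    apply hK
    refine ⟨N, hN, fun kk hkk => ?_⟩
    have h0 := hcon ⟨kk, hkk⟩
    simpa using congrArg K.subtype h0
  obtain ⟨κ, hκ⟩ := hK' (Nat.factorial (2 * m)) (Nat.factorial_pos _)
  have hκ1 : κ ≠ 1 := fun hcon => hκ (by rw [hcon, one_pow])
  have hκz : ∀ z : ℤ, z ≠ 0 → |z| ≤ 2 * (m : ℤ) → κ ^ z ≠ 1 := by
    intro z hz hb hone
    have hnat : κ ^ z.natAbs = 1 := by
      rcases Int.natAbs_eq z with hzz | hzz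
      · rw [hzz, zpow_natCast] at hone; exact hone
      · rw [hzz, zpow_neg, zpow_natCast, inv_eq_one] at hone; exact hone
    have hpos : 0 < z.natAbs := Int.natAbs_pos.mpr hz
    have hle : z.natAbs ≤ 2 * m := by
      have h5 : (z.natAbs : ℤ) ≤ 2 * m := by rw [← Int.abs_eq_natAbs]; exact hb
      exact_mod_cast h5
    obtain ⟨c, hc⟩ := Nat.dvd_factorial hpos hle
    exact hκ (by rw [hc, pow_mul, hnat, one_pow])
  -- transfer to ULift
  have hxup : (ULift.up x : ULift.{u2} G₀) * ULift.up x ≠ 1 :=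
    fun hcon => hxx2 (congrArg ULift.down hcon)
  have hκ1up : (ULift.up κ : ULift.{u1} ↥K) ≠ 1 :=
    fun hcon => hκ1 (congrArg ULift.down hcon)
  have hκzup : ∀ z : ℤ, z ≠ 0 → |z| ≤ 2 * (m : ℤ) → (ULift.up κ : ULift.{u1} ↥K) ^ z ≠ 1 := by
    intro z hz hb hcon
    apply hκz z hz hb
    have h5 : κ ^ z = MulEquiv.ulift ((ULift.up κ : ULift.{u1} ↥K) ^ z) := by
      rw [map_zpow]; rfl
    rw [h5, hcon, map_one]
  -- the key injective map from `G₀ ∗ F_m`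
  have hcore := core_injective (A := ULift.{u2} G₀) (B := ULift.{u1} ↥K) (m := m)
    (ULift.up x) hxup (ULift.up κ) hκ1up hκzup
  set A' : Type (max u1 u2) := ULift.{u2} G₀ with hA'
  set B' : Type (max u1 u2) := ULift.{u1} ↥K with hB'
  set t : Fin m → Q A' B' := tQ (ULift.up x) (ULift.up κ) with ht
  set upG : G₀ →* A' := MulEquiv.ulift.symm.toMonoidHom with hupG
  set downG : A' →* G₀ := MulEquiv.ulift.toMonoidHom with hdownG
  set downK : B' →* ↥K := MulEquiv.ulift.toMonoidHom with hdownK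
  set upK : ↥K →* B' := MulEquiv.ulift.symm.toMonoidHom with hupK
  set E : Q A' B' →* Coprod G₀ ↥K :=
    CoprodI.lift (famRec ((Coprod.inl).comp downG) ((Coprod.inr).comp downK)) with hE
  set rE : Coprod G₀ ↥K →* Q A' B' :=
    Coprod.lift ((ofA (B := B')).comp upG) ((ofB (A := A')).comp upK) with hrE
  have hrEE : rE.comp E = MonoidHom.id _ := by
    apply CoprodI.ext_hom
    intro b
    cases b
    · ext y
      simp [hE, hrE, CoprodI.lift_of, famRec, ofB, hupK, hdownK]
    · ext y
      simp [hE, hrE, CoprodI.lift_of, famRec, ofA, hupG, hdownG]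
  have hEinj : Function.Injective E :=
    (Function.LeftInverse.injective (g := rE)
      (fun y => by rw [← MonoidHom.comp_apply, hrEE, MonoidHom.id_apply]))
  set φ : Coprod G₀ ↥K →* Ghat := Coprod.lift ι K.subtype with hφ
  set Φ : Q A' B' →* Ghat := φ.comp E with hΦ
  set up0 : Coprod G₀ (FreeGroup (Fin m)) →* Coprod A' (FreeGroup (Fin m)) :=
    Coprod.map upG (MonoidHom.id _) with hup0
  have hup0inj : Function.Injective up0 := by
    have hcomp : (Coprod.map downG (MonoidHom.id _)).comp up0 = MonoidHom.id _ := by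
      apply Coprod.hom_ext
      · ext g0
        simp [hup0, hupG, hdownG]
      · apply FreeGroup.ext_hom
        intro i
        simp [hup0]
    exact Function.LeftInverse.injective (g := Coprod.map downG (MonoidHom.id _))
      (fun y => by rw [← MonoidHom.comp_apply, hcomp, MonoidHom.id_apply])
  set χ : Coprod G₀ (FreeGroup (Fin m)) →* Q A' B' :=
    (Coprod.lift (ofA (B := B')) (FreeGroup.lift t)).comp up0 with hχ
  have hχinj : Function.Injective χ := by
    rw [hχ, MonoidHom.coe_comp]
    exact hcore.comp hup0inj
  set hφh : Fin m → Ghat := fun i => Φ (t i) with hφhdef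
  -- the composite identity
  have hkey : Φ.comp χ = Coprod.lift ι (FreeGroup.lift hφh) := by
    apply Coprod.hom_ext
    · ext g0
      simp [hχ, hΦ, hφ, hE, hup0, CoprodI.lift_of, famRec, ofA, hupG, hdownG]
    · apply FreeGroup.ext_hom
      intro i
      simp [hχ, hup0, hφhdef]
  -- surjectivity of the limit evaluation
  have hsurj : ∀ y : Ghat, ∃ z, Coprod.lift ι (FreeGroup.lift ghat) z = y := by
    have hle : Subgroup.closure (Set.range ι ∪ Set.range ghat) ≤
        (Coprod.lift ι (FreeGroup.lift ghat)).range := by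
      rw [Subgroup.closure_le]
      rintro y (⟨g0, rfl⟩ | ⟨i, rfl⟩)
      · exact ⟨Coprod.inl g0, by simp⟩
      · exact ⟨Coprod.inr (FreeGroup.of i), by simp⟩
    intro y
    have hmem : y ∈ (Coprod.lift ι (FreeGroup.lift ghat)).range := by
      apply hle
      rw [hgen]
      trivial
    obtain ⟨z, hz⟩ := hmem
    exact ⟨z, hz⟩
  -- Lemma A : every evaluation of `w` in `Ghat` is trivial
  have lemA : ∀ h' : Fin m → Ghat, Coprod.lift ι (FreeGroup.lift h') w = 1 := by
    intro h'
    choose uu huu using fun i => hsurj (h' i)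
    set σ : Coprod G₀ (FreeGroup (Fin m)) →* Coprod G₀ (FreeGroup (Fin ℓ)) :=
      Coprod.lift Coprod.inl (FreeGroup.lift uu) with hσ
    have hcomp : (Coprod.lift ι (FreeGroup.lift ghat)).comp σ =
        Coprod.lift ι (FreeGroup.lift h') := by
      apply Coprod.hom_ext
      · ext g0
        simp [hσ]
      · apply FreeGroup.ext_hom
        intro i
        simp [hσ, huu]
    have hev : ∀ n, (evalWord (g n)).comp σ =
        evalWord (fun i => evalWord (g n) (uu i)) := by
      intro n
      apply Coprod.hom_ext
      · ext g0
        simp [hσ, evalWord]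
      · apply FreeGroup.ext_hom
        intro i
        simp [hσ, evalWord]
    have h1 : ∀ n, evalWord (g n) (σ w) = 1 := by
      intro n
      have h6 : evalWord (g n) (σ w) = ((evalWord (g n)).comp σ) w := rfl
      rw [h6, hev n]
      exact hwid _
    have h2 := (hlim (σ w)).2 (Filter.Eventually.of_forall h1)
    calc Coprod.lift ι (FreeGroup.lift h') w
        = ((Coprod.lift ι (FreeGroup.lift ghat)).comp σ) w := by rw [hcomp]
      _ = 1 := h2
  -- put everything together
  have hΦχw : Φ (χ w) = 1 := by
    have h7 : (Φ.comp χ) w = 1 := by rw [hkey]; exact lemA hφh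
    simpa using h7
  have hEχw : E (χ w) = 1 := by
    apply hbij.injective
    rw [map_one]
    exact hΦχw
  have hχw : χ w = 1 := by
    apply hEinj
    rw [map_one]
    exact hEχw
  have hw1 : w = 1 := by
    apply hχinj
    rw [map_one]
    exact hχw
  exact hwr ⟨1, by rw [map_one, hw1]⟩

/-- Let `G` satisfy a mixed identity and not be of finite exponent. Let `Ĝ` be
a group containing `G` (via an injective homomorphism `ι`) and generated by `G` together with
`ĝ₁, …, ĝ_ℓ`, and suppose `Ĝ` is a limit over `G`: there are tuples `(g_{n,1},…,g_{n,ℓ}) ∈ G^ℓ`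
such that each word with constants `u ∈ G ∗ F_ℓ` evaluates to `1` at `(ĝ₁,…,ĝ_ℓ)` in `Ĝ` iff it
evaluates to `1` at `(g_{n,1},…,g_{n,ℓ})` in `G` for all sufficiently large `n`. Then for every
subgroup `K ≤ Ĝ` not of finite exponent, the canonical homomorphism `G ∗ K → Ĝ` is not an
isomorphism. -/
theorem limit_group_not_free_product_of_mixed_identity
    (hmix : HasMixedIdentity G) (hexp : ¬ FiniteExponent G)
    {Ghat : Type*} [Group Ghat] (ι : G →* Ghat) (hι : Function.Injective ι)
    {ℓ : ℕ} (ghat : Fin ℓ → Ghat)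
    (hgen : Subgroup.closure (Set.range ι ∪ Set.range ghat) = ⊤)
    (g : ℕ → Fin ℓ → G)
    (hlim : ∀ u : Monoid.Coprod G (FreeGroup (Fin ℓ)),
      Monoid.Coprod.lift ι (FreeGroup.lift ghat) u = 1 ↔
        ∀ᶠ n in atTop, evalWord (g n) u = 1)
    (K : Subgroup Ghat) (hK : ¬ ∃ N : ℕ, 0 < N ∧ ∀ k ∈ K, k ^ N = 1) :
    ¬ Function.Bijective (Monoid.Coprod.lift ι K.subtype) := by
  exact limit_aux hmix hexp ι hι ghat hgen g hlim K hK

end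
end

section
/- Let G be a mixed identity free group and let n ≥ 1. Then for every finite set S of nontrivial elements of the free product G ∗ F_n (F_n free of rank n), there exists a tuple (g₁,…,g_n) ∈ G^n such that the evaluation homomorphism G ∗ F_n → G (identity on G, i-th free generator ↦ g_i) sends no element of S to 1. Consequently G ∗ F_n is a limit group over G: every finite subset of the set of relations and non-relations satisfied by a free basis of the F_n-factor in G ∗ F_n (with constants from G) is realized by a tuple in G. -/
noncomputable section

universe u

namespace MifAux

/-- Bool-indexed family for the binary free product. -/
abbrev Fam (H X : Type u) : Bool → Type u := fun b => Bool.rec H (FreeGroup X) b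

instance famGroup (H X : Type u) [Group H] : ∀ b, Group (Fam H X b)
  | false => ‹Group H›
  | true => inferInstanceAs (Group (FreeGroup X))

open Monoid

theorem comm_ne_one {H : Type u} [Group H] {X : Type u} (x : X) {a b : H}
    (ha : a ≠ 1) (hb : b ≠ 1) :
    Coprod.inl a * Coprod.inr (FreeGroup.of x) * Coprod.inl b *
      (Coprod.inr (FreeGroup.of x) : Coprod H (FreeGroup X))⁻¹ *
      (Coprod.inl a)⁻¹ * Coprod.inr (FreeGroup.of x) * (Coprod.inl b)⁻¹ *
      (Coprod.inr (FreeGroup.of x))⁻¹ ≠ 1 := by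
  classical
  intro hcon
  have ht : (FreeGroup.of x : FreeGroup X) ≠ 1 := FreeGroup.of_ne_one x
  set t : FreeGroup X := FreeGroup.of x with ht_def
  let φ : Coprod H (FreeGroup X) →* CoprodI (Fam H X) :=
    Coprod.lift (CoprodI.of (M := Fam H X) (i := false)) (CoprodI.of (M := Fam H X) (i := true))
  have hft : (false : Bool) ≠ true := by decide
  have htf : (true : Bool) ≠ false := by decide
  let w : CoprodI.NeWord (Fam H X) false true :=
    .append (.singleton (show Fam H X false from a) ha) hft <|
    .append (.singleton (show Fam H X true from t) ht) htf <|
    .append (.singleton (show Fam H X false from b) hb) hft <|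
    .append (.singleton (show Fam H X true from t⁻¹) (inv_ne_one.2 ht)) htf <|
    .append (.singleton (show Fam H X false from a⁻¹) (inv_ne_one.2 ha)) hft <|
    .append (.singleton (show Fam H X true from t) ht) htf <|
    .append (.singleton (show Fam H X false from b⁻¹) (inv_ne_one.2 hb)) hft <|
    .singleton (show Fam H X true from t⁻¹) (inv_ne_one.2 ht)
  have hwprod : w.prod = 1 := by
    have h1 : φ (Coprod.inl a * Coprod.inr t * Coprod.inl b * (Coprod.inr t)⁻¹ *
        (Coprod.inl a)⁻¹ * Coprod.inr t * (Coprod.inl b)⁻¹ * (Coprod.inr t)⁻¹) = 1 := by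
      rw [hcon, map_one]
    rw [← h1]
    simp only [w, map_mul, map_inv, Coprod.lift_apply_inl, Coprod.lift_apply_inr, φ,
      CoprodI.NeWord.append_prod, CoprodI.NeWord.prod_singleton, map_inv]
    rfl
  have hinj : Function.Injective (CoprodI.Word.prod (M := Fam H X)) := by
    intro w1 w2 h
    have e1 : CoprodI.Word.equiv w1.prod = w1 := CoprodI.Word.equiv.right_inv w1
    have e2 : CoprodI.Word.equiv w2.prod = w2 := CoprodI.Word.equiv.right_inv w2
    rw [← e1, ← e2, h]
  have hempty : w.toWord = CoprodI.Word.empty := by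
    apply hinj
    rw [show w.toWord.prod = w.prod from rfl, hwprod, CoprodI.Word.prod_empty]
  have := CoprodI.NeWord.toList_ne_nil w
  rw [show w.toList = w.toWord.toList from rfl, hempty] at this
  exact this rfl

end MifAux

variable {G : Type*} [Group G]

namespace MifAux

open Monoid

variable {G : Type u} [Group G]

variable (G) in
/-- The embedding `(G ∗ F_ℓ) ∗ F_1 → G ∗ F_{ℓ+1}`. -/
def jmap (ℓ : ℕ) :
    Coprod (Coprod G (FreeGroup (Fin ℓ))) (FreeGroup (ULift.{u} Unit)) →*
      Coprod G (FreeGroup (Fin (ℓ + 1))) :=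
  Coprod.lift
    (Coprod.lift Coprod.inl
      (FreeGroup.lift fun i => Coprod.inr (FreeGroup.of i.castSucc)))
    (FreeGroup.lift fun _ => Coprod.inr (FreeGroup.of (Fin.last ℓ)))

theorem jmap_injective (ℓ : ℕ) : Function.Injective (jmap G ℓ) := by
  set σ : Coprod G (FreeGroup (Fin (ℓ + 1))) →*
      Coprod (Coprod G (FreeGroup (Fin ℓ))) (FreeGroup (ULift.{u} Unit)) :=
    Coprod.lift
      (Coprod.inl.comp Coprod.inl)
      (FreeGroup.lift fun i : Fin (ℓ + 1) =>
        if h : (i : ℕ) < ℓ then Coprod.inl (Coprod.inr (FreeGroup.of ⟨i, h⟩))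
        else Coprod.inr (FreeGroup.of (ULift.up ()))) with hσdef
  have hσ : σ.comp (jmap G ℓ) = MonoidHom.id _ := by
    apply Coprod.hom_ext
    · apply Coprod.hom_ext
      · ext g
        simp [σ, jmap, Coprod.lift_apply_inl, Coprod.lift_apply_inr]
      · apply FreeGroup.ext_hom
        intro i
        simp [σ, jmap, Coprod.lift_apply_inl, Coprod.lift_apply_inr, FreeGroup.lift_apply_of,
          Fin.coe_castSucc, i.isLt, Fin.eta]
    · apply FreeGroup.ext_hom
      rintro ⟨⟨⟩⟩
      simp [σ, jmap, Coprod.lift_apply_inl, Coprod.lift_apply_inr, FreeGroup.lift_apply_of,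
        Fin.val_last]
  exact fun x y h => by
    have hx := DFunLike.congr_fun hσ x
    have hy := DFunLike.congr_fun hσ y
    simp only [MonoidHom.comp_apply, MonoidHom.id_apply] at hx hy
    rw [← hx, ← hy, h]

variable (G) in
/-- The distinguished stable letter. -/
def tau (ℓ : ℕ) :
    Coprod (Coprod G (FreeGroup (Fin ℓ))) (FreeGroup (ULift.{u} Unit)) :=
  Coprod.inr (FreeGroup.of (ULift.up ()))

variable (G) in
/-- The commutator `[u, τ w τ⁻¹]`. -/
def commW (ℓ : ℕ) (u w : Coprod G (FreeGroup (Fin ℓ))) :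
    Coprod (Coprod G (FreeGroup (Fin ℓ))) (FreeGroup (ULift.{u} Unit)) :=
  Coprod.inl u * tau G ℓ * Coprod.inl w * (tau G ℓ)⁻¹ * (Coprod.inl u)⁻¹ * tau G ℓ *
    (Coprod.inl w)⁻¹ * (tau G ℓ)⁻¹

theorem commW_ne_one {ℓ : ℕ} {u w : Coprod G (FreeGroup (Fin ℓ))} (hu : u ≠ 1) (hw : w ≠ 1) :
    jmap G ℓ (commW G ℓ u w) ≠ 1 := by
  intro h
  have : commW G ℓ u w = 1 := jmap_injective ℓ (by rw [h, map_one])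
  exact comm_ne_one (ULift.up ()) hu hw this

theorem eval_jmap_inl {ℓ : ℕ} (g' : Fin (ℓ + 1) → G) (u : Coprod G (FreeGroup (Fin ℓ))) :
    evalWord g' (jmap G ℓ (Coprod.inl u)) = evalWord (g' ∘ Fin.castSucc) u := by
  have h : ((evalWord g').comp ((jmap G ℓ).comp Coprod.inl)) = evalWord (g' ∘ Fin.castSucc) := by
    apply Coprod.hom_ext
    · ext x
      simp [evalWord, jmap, Coprod.lift_apply_inl, Coprod.lift_apply_inr]
    · apply FreeGroup.ext_hom
      intro i
      simp [evalWord, jmap, Coprod.lift_apply_inl, Coprod.lift_apply_inr, FreeGroup.lift_apply_of]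
  exact DFunLike.congr_fun h u

theorem eval_jmap_tau {ℓ : ℕ} (g' : Fin (ℓ + 1) → G) :
    evalWord g' (jmap G ℓ (tau G ℓ)) = g' (Fin.last ℓ) := by
  simp [evalWord, jmap, tau, Coprod.lift_apply_inl, Coprod.lift_apply_inr, FreeGroup.lift_apply_of]

theorem eval_comm {ℓ : ℕ} (g' : Fin (ℓ + 1) → G) (u w : Coprod G (FreeGroup (Fin ℓ)))
    (h : evalWord g' (jmap G ℓ (commW G ℓ u w)) ≠ 1) :
    evalWord (g' ∘ Fin.castSucc) u ≠ 1 ∧ evalWord (g' ∘ Fin.castSucc) w ≠ 1 := by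
  have hval : evalWord g' (jmap G ℓ (commW G ℓ u w)) =
      evalWord (g' ∘ Fin.castSucc) u * g' (Fin.last ℓ) * evalWord (g' ∘ Fin.castSucc) w *
        (g' (Fin.last ℓ))⁻¹ * (evalWord (g' ∘ Fin.castSucc) u)⁻¹ * g' (Fin.last ℓ) *
        (evalWord (g' ∘ Fin.castSucc) w)⁻¹ * (g' (Fin.last ℓ))⁻¹ := by
    simp only [commW, map_mul, map_inv, eval_jmap_inl, eval_jmap_tau]
  constructor
  · intro h1
    apply h
    rw [hval, h1]
    group
  · intro h1
    apply h
    rw [hval, h1]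
    group

theorem single (hmif : ¬ HasMixedIdentity G) {ℓ : ℕ}
    (w : Coprod G (FreeGroup (Fin ℓ))) (hw : w ≠ 1) :
    ∃ g : Fin ℓ → G, evalWord g w ≠ 1 := by
  by_cases hmem : w ∈ (Coprod.inl : G →* Coprod G (FreeGroup (Fin ℓ))).range
  · obtain ⟨c, rfl⟩ := hmem
    refine ⟨fun _ => 1, ?_⟩
    have hc : evalWord (fun _ : Fin ℓ => (1 : G))
        ((Coprod.inl : G →* Coprod G (FreeGroup (Fin ℓ))) c) = c := by
      simp [evalWord, Coprod.lift_apply_inl]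
    rw [hc]
    intro hc1
    exact hw (by rw [hc1, map_one])
  · by_contra hno
    push_neg at hno
    exact hmif ⟨ℓ, w, hmem, hno⟩

theorem key (hmif : ¬ HasMixedIdentity G) :
    ∀ (k ℓ : ℕ) (ws : List (Coprod G (FreeGroup (Fin ℓ)))), ws.length ≤ k →
      (∀ w ∈ ws, w ≠ 1) → ∃ g : Fin ℓ → G, ∀ w ∈ ws, evalWord g w ≠ 1 := by
  intro k
  induction k with
  | zero =>
    intro ℓ ws hlen _
    have h0 : ws = [] := List.length_eq_zero_iff.mp (Nat.le_zero.mp hlen)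
    subst h0
    exact ⟨fun _ => 1, by simp⟩
  | succ k IH =>
    intro ℓ ws hlen hne
    match ws, hlen, hne with
    | [], _, _ => exact ⟨fun _ => 1, by simp⟩
    | [w], _, hne =>
      obtain ⟨g, hg⟩ := single hmif w (hne w (by simp))
      exact ⟨g, by simpa using hg⟩
    | w :: w' :: rest, hlen, hne =>
      have hwne : w ≠ 1 := hne w (by simp)
      have hlen' : ((w' :: rest).map (fun u => jmap G ℓ (commW G ℓ u w))).length ≤ k := by
        simp only [List.length_map, List.length_cons] at hlen ⊢
        omega
      have hne' : ∀ v ∈ (w' :: rest).map (fun u => jmap G ℓ (commW G ℓ u w)), v ≠ 1 := by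
        intro v hv
        obtain ⟨u, hu, rfl⟩ := List.mem_map.mp hv
        exact commW_ne_one (hne u (List.mem_cons_of_mem w hu)) hwne
      obtain ⟨g', hg'⟩ := IH (ℓ + 1) _ hlen' hne'
      refine ⟨g' ∘ Fin.castSucc, ?_⟩
      have hkey : ∀ u ∈ w' :: rest, evalWord (g' ∘ Fin.castSucc) u ≠ 1 ∧
          evalWord (g' ∘ Fin.castSucc) w ≠ 1 := fun u hu =>
        eval_comm g' u w (hg' _ (List.mem_map_of_mem hu))
      intro v hv
      rcases List.mem_cons.mp hv with rfl | hv'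
      · exact (hkey w' (by simp)).2
      · exact (hkey v hv').1

end MifAux

/-- **Statement 6.** If `G` is mixed identity free then for every `n ≥ 1` and every finite set
`S` of nontrivial elements of `G ∗ F_n` there is a tuple `(g₁,…,g_n) ∈ G^n` whose evaluation
homomorphism `G ∗ F_n → G` sends no element of `S` to `1`. (Hence `G ∗ F_n` is a limit group
over `G`.) -/
theorem mif_implies_free_product_is_limit
    (hmif : ¬ HasMixedIdentity G) (n : ℕ) (hn : 1 ≤ n)
    (S : Finset (Monoid.Coprod G (FreeGroup (Fin n))))
    (hS : ∀ w ∈ S, w ≠ 1) :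
    ∃ g : Fin n → G, ∀ w ∈ S, evalWord g w ≠ 1 := by
  classical
  obtain ⟨g, hg⟩ := MifAux.key hmif S.toList.length n S.toList le_rfl
    (fun w hw => hS w (Finset.mem_toList.mp hw))
  exact ⟨g, fun w hw => hg w (Finset.mem_toList.mpr hw)⟩

end
end

section
/- The group A(ℚ) of all order-automorphisms of (ℚ, <), acting on ℚ equipped with the topology induced from ℝ, has no global fixed points and hereditarily separates ℚ: for every infinite open subset Z ⊆ ℚ, every finite subset Y ⊆ Z, and every point z ∈ Z \ Y, there exists an order-automorphism f of ℚ which fixes every point of (ℚ \ Z) ∪ Y and satisfies f(z) ≠ z. -/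
/-- Piecewise-linear map supported on `(z - d/2, z + d/2)`, sending `z` to `z + d/4`. -/
def pwQ (z d x : ℚ) : ℚ :=
  if x ≤ z - d/2 then x
  else if x ≤ z then z - d/2 + (3/2) * (x - (z - d/2))
  else if x ≤ z + d/2 then z + d/4 + (1/2) * (x - z)
  else x

/-- Inverse of `pwQ z d`. -/
def pwQInv (z d y : ℚ) : ℚ :=
  if y ≤ z - d/2 then y
  else if y ≤ z + d/4 then z - d/2 + (2/3) * (y - (z - d/2))
  else if y ≤ z + d/2 then z + 2 * (y - (z + d/4))
  else y

lemma pwQ_strictMono (z d : ℚ) (hd : 0 < d) : StrictMono (pwQ z d) := by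
  intro x y hxy
  unfold pwQ
  split_ifs <;> linarith

lemma pwQ_rightInv (z d : ℚ) (hd : 0 < d) (y : ℚ) : pwQ z d (pwQInv z d y) = y := by
  unfold pwQ pwQInv
  split_ifs <;> linarith

lemma pwQ_fix (z d x : ℚ) (hx : x ≤ z - d/2 ∨ z + d/2 ≤ x) (hd : 0 < d) :
    pwQ z d x = x := by
  unfold pwQ
  rcases hx with h | h <;> split_ifs <;> linarith

lemma pwQ_self (z d : ℚ) (hd : 0 < d) : pwQ z d z = z + d/4 := by
  unfold pwQ
  split_ifs <;> linarith

/-- **Statement 7.** The group `A(ℚ)` of order-automorphisms of `(ℚ, <)`, acting on `ℚ` with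
its topology induced from `ℝ`, has no global fixed points, and it hereditarily separates `ℚ`:
for every infinite open `Z ⊆ ℚ`, every finite `Y ⊆ Z` and every `z ∈ Z \ Y` there is an
order-automorphism of `ℚ` fixing `(ℚ \ Z) ∪ Y` pointwise and moving `z`. -/
theorem orderAutQ_hereditarily_separates :
    (∀ x : ℚ, ∃ f : ℚ ≃o ℚ, f x ≠ x) ∧
      (∀ Z : Set ℚ, IsOpen Z → Z.Infinite →
        ∀ Y : Set ℚ, Y ⊆ Z → Y.Finite →
          ∀ z ∈ Z \ Y, ∃ f : ℚ ≃o ℚ, (∀ x ∈ Zᶜ ∪ Y, f x = x) ∧ f z ≠ z) := by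
  constructor
  · intro x
    exact ⟨OrderIso.addRight 1, by simp⟩
  · intro Z hZopen _ Y _ hYfin z hz
    obtain ⟨hzZ, hzY⟩ := hz
    -- find a real ball around z inside Z, and a rational radius
    obtain ⟨ε, hε, hball⟩ := Metric.isOpen_iff.mp hZopen z hzZ
    obtain ⟨q, hq0, hqε⟩ := exists_rat_btwn hε
    -- shrink q to avoid Y
    classical
    set F : Finset ℚ := insert q (hYfin.toFinset.image fun y => |y - z|) with hF
    have hFne : F.Nonempty := ⟨q, Finset.mem_insert_self _ _⟩
    set d : ℚ := F.min' hFne with hdmin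
    have hd_mem : d ∈ F := F.min'_mem hFne
    have hd_pos : 0 < d := by
      rw [hF] at hd_mem
      rcases Finset.mem_insert.mp hd_mem with h | h
      · rw [h]; exact_mod_cast hq0
      · obtain ⟨y, hy, hyd⟩ := Finset.mem_image.mp h
        rw [Set.Finite.mem_toFinset] at hy
        have : y ≠ z := fun hyz => hzY (hyz ▸ hy)
        rw [← hyd]
        exact abs_pos.mpr (sub_ne_zero.mpr this)
    have hd_le_q : d ≤ q := F.min'_le q (Finset.mem_insert_self _ _)
    have hd_le : ∀ y ∈ Y, d ≤ |y - z| := by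
      intro y hy
      exact F.min'_le _ (Finset.mem_insert.mpr (Or.inr
        (Finset.mem_image.mpr ⟨y, (Set.Finite.mem_toFinset hYfin).mpr hy, rfl⟩)))
    -- the order automorphism
    have hsurj : Function.Surjective (pwQ z d) := fun y =>
      ⟨pwQInv z d y, pwQ_rightInv z d hd_pos y⟩
    refine ⟨StrictMono.orderIsoOfSurjective _ (pwQ_strictMono z d hd_pos) hsurj, ?_, ?_⟩
    · intro x hx
      have hfix : x ≤ z - d/2 ∨ z + d/2 ≤ x := by
        rcases hx with hx | hx
        · -- x ∉ Z : x is outside the ball of radius ε, hence outside the small interval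
          by_contra hcon
          push_neg at hcon
          obtain ⟨h1, h2⟩ := hcon
          apply hx
          apply hball
          rw [Metric.mem_ball, Rat.dist_eq]
          have h1' : (z : ℝ) - d/2 < x := by exact_mod_cast h1
          have h2' : (x : ℝ) < z + d/2 := by exact_mod_cast h2
          have hdq : (d : ℝ) ≤ q := by exact_mod_cast hd_le_q
          have hd0 : (0 : ℝ) < d := by exact_mod_cast hd_pos
          have habs : |(x : ℝ) - z| < (d : ℝ) / 2 := by
            rw [abs_lt]; constructor <;> linarith
          linarith [hqε]
        · -- x ∈ Y
          have := hd_le x hx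
          rcases abs_sub_le_iff.mp (le_of_eq rfl : |x - z| ≤ |x - z|) with _
          rcases le_or_gt x z with h | h
          · left
            have : d ≤ z - x := by
              have : |x - z| = z - x := by rw [abs_sub_comm, abs_of_nonneg (by linarith)]
              linarith [hd_le x hx, this ▸ hd_le x hx]
            linarith
          · right
            have : |x - z| = x - z := abs_of_pos (by linarith)
            have := hd_le x hx
            linarith [this, (abs_of_pos (show (0:ℚ) < x - z by linarith) : |x - z| = x - z)]
      show pwQ z d x = x
      exact pwQ_fix z d x hfix hd_pos
    · show pwQ z d z ≠ z
      rw [pwQ_self z d hd_pos]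
      intro h
      have : d / 4 = 0 := by linarith
      linarith
end

section
/- Let X be a perfect metric space (a metric space with no isolated points) and let the group G act faithfully on X by homeomorphisms, with finite set of global fixed points Fix(G) = {x ∈ X : g·x = x for all g ∈ G}, such that the action hereditarily separates X. Suppose h ∈ G has infinite order and supp(h^ℓ) = supp(h) for every nonzero integer ℓ, where supp(g) = {x ∈ X : g·x ≠ x}. Then for every finite set S of nontrivial elements of the free group F₂ on two generators a, b, there exists g ∈ G such that the homomorphism F₂ → G determined by a ↦ h, b ↦ g sends no element of S to 1. (Consequently there is a limit group ⟨G, g⟩ over G in which {h, g} is a free basis of a free subgroup of rank 2.) -/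
noncomputable section

/-- The support of a group element acting on a set: the points it moves. -/
def actSupp (G X : Type*) [Group G] [MulAction G X] (g : G) : Set X :=
  {x : X | g • x ≠ x}

/-- A group acting by homeomorphisms hereditarily separates `X` if for every open infinite
`Z ⊆ X`, every finite `Y ⊆ Z` and every `z ∈ Z \ (Y ∪ Fix(G))` there is `g ∈ G` fixing
`(X \ Z) ∪ Y` pointwise with `g • z ≠ z`. -/
def HereditarilySeparates (G X : Type*) [Group G] [TopologicalSpace X] [MulAction G X] :
    Prop :=
  ∀ Z : Set X, IsOpen Z → Z.Infinite →
    ∀ Y : Set X, Y ⊆ Z → Y.Finite →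
      ∀ z ∈ Z \ (Y ∪ MulAction.fixedPoints G X),
        ∃ g : G, (∀ x ∈ Zᶜ ∪ Y, g • x = x) ∧ g • z ≠ z

section Aux
variable {G X : Type*} [Group G] [MulAction G X]

theorem fixesOutside_smul_mem {U : Set X} {γ : G}
    (hγ : ∀ x, x ∉ U → γ • x = x) {x : X} (hx : x ∈ U) : γ • x ∈ U := by
  by_contra hmem
  have h1 : γ • (γ • x) = γ • x := hγ _ hmem
  have h2 : γ • x = x := smul_left_cancel γ h1
  rw [h2] at hmem
  exact hmem hx

theorem fixesOutside_inv {U : Set X} {γ : G}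
    (hγ : ∀ x, x ∉ U → γ • x = x) : ∀ x, x ∉ U → γ⁻¹ • x = x := by
  intro x hx
  nth_rewrite 1 [← hγ x hx]
  simp

end Aux

theorem chain'_of_noncancel {α : Type*} {L : List (α × Bool)}
    (H : ∀ (L₁ : List (α × Bool)) (x : α) (b : Bool) (L₂ : List (α × Bool)),
        L ≠ L₁ ++ (x, b) :: (x, !b) :: L₂) :
    L.Chain' (fun p q => p.1 = q.1 → p.2 = q.2) := by
  induction L with
  | nil => exact List.isChain_nil
  | cons a t ih =>
    cases t with
    | nil => exact List.isChain_singleton a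
    | cons c t' =>
      show List.IsChain _ _
      rw [List.isChain_cons_cons]
      refine ⟨?_, ih ?_⟩
      · intro h1
        by_contra h2
        have hc2 : c.2 = !a.2 := by
          cases ha : a.2 <;> cases hcb : c.2 <;> simp_all
        have hc : c = (a.1, !a.2) := by
          rw [Prod.ext_iff]
          exact ⟨h1.symm, hc2⟩
        have ha' : a = (a.1, a.2) := rfl
        exact H [] a.1 a.2 t' (by rw [hc]; rfl)
      · intro L₁ x b L₂ hEq
        exact H (a :: L₁) x b L₂ (by rw [List.cons_append, hEq])

theorem chain'_toWord {α : Type*} [DecidableEq α] (w : FreeGroup α) :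
    w.toWord.Chain' (fun p q => p.1 = q.1 → p.2 = q.2) := by
  classical
  apply chain'_of_noncancel
  intro L₁ x b L₂ hEq
  have := FreeGroup.reduce_toWord w
  rw [hEq] at this
  exact FreeGroup.reduce.not this


theorem infinite_of_open_nonempty {X : Type*} [MetricSpace X]
    (hperf : ∀ x : X, x ∈ closure ({x}ᶜ : Set X))
    {U : Set X} (hU : IsOpen U) (hne : U.Nonempty) : U.Infinite := by
  by_contra hfin
  rw [Set.not_infinite] at hfin
  obtain ⟨x, hx⟩ := hne
  have hOopen : IsOpen (U ∩ (U \ {x})ᶜ) :=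
    hU.inter ((hfin.diff (t := {x})).isClosed).isOpen_compl
  have hOx : x ∈ U ∩ (U \ {x})ᶜ := ⟨hx, by simp⟩
  obtain ⟨y, hy1, hy2⟩ := mem_closure_iff.mp (hperf x) _ hOopen hOx
  have : y = x := by
    by_contra hne'
    exact hy1.2 ⟨hy1.1, hne'⟩
  exact hy2 this


section Sep
variable {G X : Type*} [Group G] [MetricSpace X] [MulAction G X]
variable {U : Set X}

theorem sep_exists (hsep : HereditarilySeparates G X)
    (hUo : IsOpen U) (hUi : U.Infinite)
    (hUf : ∀ x ∈ U, x ∉ MulAction.fixedPoints G X)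
    {F : Set X} (hF : F.Finite) {v : X} (hv : v ∈ U) :
    ∃ c : G, (∀ x, x ∉ U → c • x = x) ∧ (∀ x ∈ F, x ≠ v → c • x = x) ∧
      c • v ≠ v ∧ c • v ∈ U ∧ c • v ∉ F := by
  set Z : Set X := U \ (F \ {v}) with hZ
  have hZo : IsOpen Z := hUo.sdiff (hF.diff (t := {v})).isClosed
  have hZi : Z.Infinite := hUi.diff (hF.diff (t := {v}))
  have hvZ : v ∈ Z := ⟨hv, by simp⟩
  obtain ⟨c, hc1, hc2⟩ := hsep Z hZo hZi ∅ (Set.empty_subset _) Set.finite_empty v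
    ⟨hvZ, by simp [hUf v hv]⟩
  have hfixZc : ∀ x, x ∉ Z → c • x = x := fun x hx => hc1 x (Or.inl hx)
  have hcvZ : c • v ∈ Z := by
    by_contra hmem
    have h1 : c • (c • v) = c • v := hfixZc _ hmem
    have h2 : c • v = v := smul_left_cancel c h1
    exact hc2 h2
  refine ⟨c, ?_, ?_, hc2, hcvZ.1, ?_⟩
  · intro x hx
    exact hfixZc x (fun hxz => hx hxz.1)
  · intro x hxF hxv
    exact hfixZc x (fun hxz => hxz.2 ⟨hxF, hxv⟩)
  · intro hcvF
    exact hcvZ.2 ⟨hcvF, hc2⟩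

theorem step1 (hsep : HereditarilySeparates G X)
    (hUo : IsOpen U) (hUi : U.Infinite)
    (hUf : ∀ x ∈ U, x ∉ MulAction.fixedPoints G X)
    {γ : G} (hγ : ∀ x, x ∉ U → γ • x = x)
    {P : Set X} (hP : P.Finite)
    {R : Set (X × X)} (hRP : ∀ p ∈ R, p.1 ∈ P ∧ p.2 ∈ P)
    (hSat : ∀ p ∈ R, γ • p.1 = p.2)
    {q : X} (hqU : q ∈ U)
    (hqR : ∀ p ∈ R, p.1 ≠ q) :
    ∃ (γ' : G) (v : X), (∀ x, x ∉ U → γ' • x = x) ∧ (∀ p ∈ R, γ' • p.1 = p.2) ∧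
      γ' • q = v ∧ v ∈ U ∧ v ∉ P := by
  obtain ⟨c₁, hc₁U, hc₁F, hc₁v, hc₁vU, hc₁vF⟩ := sep_exists hsep hUo hUi hUf hP hqU
  set z : X := c₁ • q with hzdef
  have hzU : z ∈ U := hc₁vU
  have hzP : z ∉ P := hc₁vF
  set v₁ : X := γ • z with hv₁def
  have hv₁U : v₁ ∈ U := by
    by_contra hmem
    have h1 : γ • v₁ = v₁ := hγ _ hmem
    have h2 : v₁ = z := smul_left_cancel γ h1
    rw [h2] at hmem; exact hmem hzU
  obtain ⟨c₂, hc₂U, hc₂F, hc₂v, hc₂vU, hc₂vF⟩ :=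
    sep_exists hsep hUo hUi hUf (hP.union (Set.finite_singleton z)) hv₁U
  refine ⟨c₂ * γ * c₁, c₂ • v₁, ?_, ?_, ?_, hc₂vU, fun hmem => hc₂vF (Or.inl hmem)⟩
  · intro x hx
    rw [mul_smul, mul_smul, hc₁U x hx, hγ x hx, hc₂U x hx]
  · intro p hp
    have hx1 : c₁ • p.1 = p.1 := hc₁F p.1 (hRP p hp).1 (hqR p hp)
    have hy : γ • p.1 = p.2 := hSat p hp
    have hyne : p.2 ≠ v₁ := by
      intro he
      have : p.1 = z := smul_left_cancel γ (by rw [hy, he, hv₁def])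
      exact hzP (this ▸ (hRP p hp).1)
    have hy2 : c₂ • p.2 = p.2 := hc₂F p.2 (Or.inl (hRP p hp).2) hyne
    rw [mul_smul, mul_smul, hx1, hy, hy2]
  · rw [mul_smul, mul_smul]

end Sep



section Machine
variable {G X : Type*} [Group G] [MetricSpace X] [MulAction G X]

/-- evaluation of a letter -/
def evW (Γ : ℤ → G) (ℓ : ℤ × Bool) : G := if ℓ.2 then Γ ℓ.1 else (Γ ℓ.1)⁻¹

def ValidSt (U : Set X) (Γ : ℤ → G) (R : ℤ → Set (X × X)) (P : Set X) : Prop :=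
  (∀ j : ℤ, ∀ x, x ∉ U → Γ j • x = x) ∧ P.Finite ∧ P ⊆ U ∧
  (∀ j : ℤ, (R j).Finite) ∧ (∀ j : ℤ, ∀ p ∈ R j, p.1 ∈ P ∧ p.2 ∈ P)

def SatSt (Γ : ℤ → G) (R : ℤ → Set (X × X)) : Prop :=
  ∀ j : ℤ, ∀ p ∈ R j, Γ j • p.1 = p.2

def ConformSt (R : ℤ → Set (X × X)) (v : X) (o : Option (ℤ × Bool)) : Prop :=
  ∀ j : ℤ, ∀ p ∈ R j, (p.1 = v → o = some (j, false)) ∧ (p.2 = v → o = some (j, true))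

theorem step1' (hsep : HereditarilySeparates G X) {U : Set X}
    (hUo : IsOpen U) (hUi : U.Infinite)
    (hUf : ∀ x ∈ U, x ∉ MulAction.fixedPoints G X)
    {γ : G} (hγ : ∀ x, x ∉ U → γ • x = x)
    {P : Set X} (hP : P.Finite)
    {R : Set (X × X)} (hRP : ∀ p ∈ R, p.1 ∈ P ∧ p.2 ∈ P)
    (hSat : ∀ p ∈ R, γ • p.1 = p.2)
    {q : X} (hqU : q ∈ U)
    (hqR : ∀ p ∈ R, p.1 ≠ q) :
    ∃ (γ' : G) (v : X), (∀ x, x ∉ U → γ' • x = x) ∧ (∀ p ∈ R, γ' • p.1 = p.2) ∧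
      γ' • q = v ∧ v ∈ U ∧ v ∉ P :=
  step1 hsep hUo hUi hUf hγ hP hRP hSat hqU hqR

theorem word_lemma (hsep : HereditarilySeparates G X) {U : Set X}
    (hUo : IsOpen U) (hUi : U.Infinite)
    (hUf : ∀ x ∈ U, x ∉ MulAction.fixedPoints G X) :
    ∀ L : List (ℤ × Bool), L.Chain' (fun p q => p.1 = q.1 → p.2 = q.2) →
    ∀ (Γ : ℤ → G) (R : ℤ → Set (X × X)) (P : Set X),
      ValidSt U Γ R P → SatSt Γ R →
    ∀ q : X, q ∈ P →
    ∀ o : Option (ℤ × Bool), ConformSt R q o →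
      (∀ jb ∈ L.getLast?, ∀ b', o = some (jb.1, b') → b' = jb.2) →
      ∃ (Γ' : ℤ → G) (R' : ℤ → Set (X × X)) (P' : Set X) (v : X),
        ValidSt U Γ' R' P' ∧ SatSt Γ' R' ∧ (∀ j, R j ⊆ R' j) ∧ P ⊆ P' ∧ v ∈ P' ∧
        (L ≠ [] → v ∉ P) ∧ ConformSt R' v (L.head?.or o) ∧
        (∀ Γ'' : ℤ → G, SatSt Γ'' R' → (L.map (evW Γ'')).prod • q = v) := by
  intro L
  induction L with
  | nil =>
    intro _ Γ R P hval hsat q hqP o hconf _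
    exact ⟨Γ, R, P, q, hval, hsat, fun j => subset_rfl, subset_rfl, hqP,
      fun hne => absurd rfl hne, by simpa using hconf, fun Γ'' _ => by simp⟩
  | cons ℓ L' ih =>
    intro hL Γ R P hval hsat q hqP o hconf hlast
    obtain ⟨hadj, hL'⟩ := List.isChain_cons.mp hL
    have hlast' : ∀ jb ∈ L'.getLast?, ∀ b', o = some (jb.1, b') → b' = jb.2 := by
      cases L' with
      | nil => intro jb hjb; simp at hjb
      | cons c t =>
        intro jb hjb b' hb'
        exact hlast jb (by rwa [List.getLast?_cons_cons]) b' hb'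
    obtain ⟨Γ1, R1, P1, v1, hval1, hsat1, hsub1, hPsub1, hv1P1, _, hconf1, heval1⟩ :=
      ih hL' Γ R P hval hsat q hqP o hconf hlast'
    have hv1U : v1 ∈ U := hval1.2.2.1 hv1P1
    set j : ℤ := ℓ.1 with hjdef
    set b : Bool := ℓ.2 with hbdef
    have hNC : ∀ b', L'.head?.or o = some (j, b') → b' = b := by
      intro b' hb'
      cases hL'head : L'.head? with
      | some c =>
        rw [hL'head] at hb'
        have hc : c = (j, b') := Option.some.inj hb'
        have := hadj c (by rw [hL'head]; rfl)
        have h2 := this (by rw [hc])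
        rw [hc] at h2
        exact h2.symm
      | none =>
        rw [hL'head] at hb'
        have hb'' : o = some (j, b') := hb'
        have hL'nil : L' = [] := List.head?_eq_none_iff.mp hL'head
        subst hL'nil
        exact hlast ℓ (by simp) b' hb''
    -- get the new γ' for index j and the new point v, with hkey the defining property
    have key : ∃ (γ' : G) (v : X), (∀ x, x ∉ U → γ' • x = x) ∧
        (∀ p ∈ R1 j, γ' • p.1 = p.2) ∧ v ∈ U ∧ v ∉ P1 ∧
        (if b then γ' • v1 = v else γ' • v = v1) := by
      cases hbv : b with
      | true =>
        have hqR : ∀ p ∈ R1 j, p.1 ≠ v1 := by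
          intro p hp hpv
          have := hNC false ((hconf1 j p hp).1 hpv)
          rw [hbv] at this; exact Bool.noConfusion this
        obtain ⟨γ', v, h1, h2, h3, h4, h5⟩ := step1' hsep hUo hUi hUf
          (hval1.1 j) hval1.2.1 (hval1.2.2.2.2 j) (hsat1 j) hv1U hqR
        exact ⟨γ', v, h1, h2, h4, h5, by simp [h3]⟩
      | false =>
        have hqR : ∀ p ∈ Prod.swap '' R1 j, p.1 ≠ v1 := by
          rintro p ⟨p₀, hp₀, rfl⟩ hpv
          have := hNC true ((hconf1 j p₀ hp₀).2 hpv)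
          rw [hbv] at this; exact Bool.noConfusion this
        have hRP' : ∀ p ∈ Prod.swap '' R1 j, p.1 ∈ P1 ∧ p.2 ∈ P1 := by
          rintro p ⟨p₀, hp₀, rfl⟩
          exact ⟨(hval1.2.2.2.2 j p₀ hp₀).2, (hval1.2.2.2.2 j p₀ hp₀).1⟩
        have hSat' : ∀ p ∈ Prod.swap '' R1 j, (Γ1 j)⁻¹ • p.1 = p.2 := by
          rintro p ⟨p₀, hp₀, rfl⟩
          have := hsat1 j p₀ hp₀
          simp [← this]
        obtain ⟨δ', v, h1, h2, h3, h4, h5⟩ := step1' hsep hUo hUi hUf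
          (fixesOutside_inv (hval1.1 j)) hval1.2.1 hRP' hSat' hv1U hqR
        refine ⟨δ'⁻¹, v, fixesOutside_inv h1, ?_, h4, h5, ?_⟩
        · intro p hp
          have := h2 p.swap ⟨p, hp, rfl⟩
          simp only [Prod.fst_swap, Prod.snd_swap] at this
          rw [← this]; simp
        · simp only [if_neg (Bool.not_eq_true _ |>.mpr rfl)]
          rw [← h3]; simp
    obtain ⟨γ', v, hγ'U, hγ'R, hvU, hvP1, hbv⟩ := key
    classical
    set pin : X × X := if b then (v1, v) else (v, v1) with hpindef
    set Γ' : ℤ → G := Function.update Γ1 j γ' with hΓ'def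
    set R' : ℤ → Set (X × X) := Function.update R1 j (insert pin (R1 j)) with hR'def
    set P' : Set X := insert v P1 with hP'def
    have hv1v : v1 ≠ v := fun he => hvP1 (he ▸ hv1P1)
    have hsub' : ∀ j'', R1 j'' ⊆ R' j'' := by
      intro j''
      by_cases hj : j'' = j
      · subst hj; rw [hR'def, Function.update_self]; exact Set.subset_insert _ _
      · rw [hR'def, Function.update_of_ne hj]
    have hpinmem : pin ∈ R' j := by
      rw [hR'def, Function.update_self]; exact Set.mem_insert _ _
    refine ⟨Γ', R', P', v, ?_, ?_, fun j'' => (hsub1 j'').trans (hsub' j''), 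
      hPsub1.trans (Set.subset_insert _ _), Set.mem_insert _ _,
      fun _ => fun hv => hvP1 (hPsub1 hv), ?_, ?_⟩
    · -- ValidSt
      refine ⟨?_, hval1.2.1.insert v, ?_, ?_, ?_⟩
      · intro j'' x hx
        by_cases hj : j'' = j
        · subst hj; rw [hΓ'def, Function.update_self]; exact hγ'U x hx
        · rw [hΓ'def, Function.update_of_ne hj]; exact hval1.1 j'' x hx
      · rw [hP'def]; exact Set.insert_subset hvU hval1.2.2.1
      · intro j''
        by_cases hj : j'' = j
        · subst hj; rw [hR'def, Function.update_self]; exact (hval1.2.2.2.1 j).insert pin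
        · rw [hR'def, Function.update_of_ne hj]; exact hval1.2.2.2.1 j''
      · intro j'' p hp
        by_cases hj : j'' = j
        · subst hj; rw [hR'def, Function.update_self] at hp
          rcases Set.mem_insert_iff.mp hp with hpe | hpm
          · subst hpe
            cases hbvb : b <;> simp only [hpindef, hbvb] <;>
              exact ⟨by simp [hP'def, Set.mem_insert_iff, hv1P1],
                by simp [hP'def, Set.mem_insert_iff, hv1P1]⟩
          · have := hval1.2.2.2.2 j p hpm
            exact ⟨Set.subset_insert _ _ this.1, Set.subset_insert _ _ this.2⟩
        · rw [hR'def, Function.update_of_ne hj] at hp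
          have := hval1.2.2.2.2 j'' p hp
          exact ⟨Set.subset_insert _ _ this.1, Set.subset_insert _ _ this.2⟩
    · -- SatSt
      intro j'' p hp
      by_cases hj : j'' = j
      · subst hj
        rw [hR'def, Function.update_self] at hp
        rw [hΓ'def, Function.update_self]
        rcases Set.mem_insert_iff.mp hp with hpe | hpm
        · subst hpe
          cases hbvb : b
          · simp only [hpindef, hbvb, if_neg]; simpa [hbvb] using hbv
          · simpa [hpindef, hbvb] using (by simpa [hbvb] using hbv : γ' • v1 = v)
        · exact hγ'R p hpm
      · rw [hR'def, Function.update_of_ne hj] at hp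
        rw [hΓ'def, Function.update_of_ne hj]
        exact hsat1 j'' p hp
    · -- ConformSt R' v (some ℓ)
      have hheado : ((ℓ :: L').head?).or o = some ℓ := by simp
      rw [hheado]
      intro j'' p hp
      by_cases hj : j'' = j
      · subst hj
        rw [hR'def, Function.update_self] at hp
        have hℓeq : ℓ = (j, b) := rfl
        rcases Set.mem_insert_iff.mp hp with hpe | hpm
        · subst hpe
          cases hbvb : b
          · rw [hpindef, hbvb]
            simp only [if_neg Bool.false_ne_true]
            constructor
            · intro _; rw [hℓeq, hbvb]
            · intro hc; exact absurd hc hv1v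
          · rw [hpindef, hbvb]
            simp only [if_pos rfl]
            constructor
            · intro hc; exact absurd hc hv1v
            · intro _; rw [hℓeq, hbvb]
        · have hcomp := hval1.2.2.2.2 j p hpm
          constructor
          · intro hc; exact absurd (hc ▸ hcomp.1) hvP1
          · intro hc; exact absurd (hc ▸ hcomp.2) hvP1
      · rw [hR'def, Function.update_of_ne hj] at hp
        have hcomp := hval1.2.2.2.2 j'' p hp
        constructor
        · intro hc; exact absurd (hc ▸ hcomp.1) hvP1
        · intro hc; exact absurd (hc ▸ hcomp.2) hvP1
    · -- evaluation
      intro Γ'' hsat''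
      have hsatR1 : SatSt Γ'' R1 := fun j'' p hp => hsat'' j'' p (hsub' j'' hp)
      have hin := heval1 Γ'' hsatR1
      rw [List.map_cons, List.prod_cons, mul_smul, hin]
      have hpin := hsat'' j pin hpinmem
      cases hbvb : b with
      | true =>
        rw [hpindef, hbvb] at hpin
        simp only [if_pos rfl] at hpin
        have hev : evW Γ'' ℓ = Γ'' j := by
          rw [evW, ← hbdef, hbvb, if_pos rfl, ← hjdef]
        rw [hev]
        exact hpin
      | false =>
        rw [hpindef, hbvb] at hpin
        simp only [if_neg Bool.false_ne_true] at hpin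
        have hev : evW Γ'' ℓ = (Γ'' j)⁻¹ := by
          rw [evW, ← hbdef, hbvb, if_neg Bool.false_ne_true, ← hjdef]
        rw [hev, ← hpin]
        simp


theorem outer_lemma (hsep : HereditarilySeparates G X) {U : Set X}
    (hUo : IsOpen U) (hUi : U.Infinite)
    (hUf : ∀ x ∈ U, x ∉ MulAction.fixedPoints G X) :
    ∀ Ws : List (List (ℤ × Bool)),
      (∀ W ∈ Ws, W ≠ [] ∧ W.Chain' (fun p q => p.1 = q.1 → p.2 = q.2)) →
    ∀ (Γ : ℤ → G) (R : ℤ → Set (X × X)) (P : Set X),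
      ValidSt U Γ R P → SatSt Γ R →
      ∃ (Γ' : ℤ → G) (R' : ℤ → Set (X × X)) (P' : Set X),
        ValidSt U Γ' R' P' ∧ SatSt Γ' R' ∧ (∀ j, R j ⊆ R' j) ∧
        ∀ W ∈ Ws, ∃ p v : X, p ∈ U ∧ p ≠ v ∧
          ∀ Γ'' : ℤ → G, SatSt Γ'' R' → (W.map (evW Γ'')).prod • p = v := by
  intro Ws
  induction Ws with
  | nil =>
    intro _ Γ R P hval hsat
    exact ⟨Γ, R, P, hval, hsat, fun j => subset_rfl, by simp⟩
  | cons W Ws' ih =>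
    intro hWs Γ R P hval hsat
    obtain ⟨hWne, hWch⟩ := hWs W (by simp)
    obtain ⟨p₀, hp₀⟩ := (hUi.diff hval.2.1).nonempty
    have hp₀U : p₀ ∈ U := hp₀.1
    have hp₀P : p₀ ∉ P := hp₀.2
    set P₁ : Set X := insert p₀ P with hP₁def
    have hval₁ : ValidSt U Γ R P₁ := by
      refine ⟨hval.1, hval.2.1.insert p₀, Set.insert_subset hp₀U hval.2.2.1,
        hval.2.2.2.1, ?_⟩
      intro j p hp
      have := hval.2.2.2.2 j p hp
      exact ⟨Set.subset_insert _ _ this.1, Set.subset_insert _ _ this.2⟩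
    have hconf : ConformSt R p₀ none := by
      intro j p hp
      have := hval.2.2.2.2 j p hp
      constructor
      · intro hc; exact absurd (hc ▸ this.1) hp₀P
      · intro hc; exact absurd (hc ▸ this.2) hp₀P
    obtain ⟨Γ1, R1, P1, v1, hval1, hsat1, hsub1, hPsub1, hv1P1, hv1new, _, heval1⟩ :=
      word_lemma hsep hUo hUi hUf W hWch Γ R P₁ hval₁ hsat p₀ (Set.mem_insert _ _)
        none hconf (by intro jb _ b' hb'; cases hb')
    obtain ⟨Γ', R', P', hval', hsat', hsub', hGuar⟩ :=
      ih (fun W' hW' => hWs W' (by simp [hW'])) Γ1 R1 P1 hval1 hsat1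
    refine ⟨Γ', R', P', hval', hsat', fun j => (hsub1 j).trans (hsub' j), ?_⟩
    intro W' hW'
    rcases List.mem_cons.mp hW' with hW'e | hW'm
    · subst hW'e
      refine ⟨p₀, v1, hp₀U, ?_, ?_⟩
      · intro he
        exact (hv1new hWne) (he ▸ Set.mem_insert _ _)
      · intro Γ'' hsat''
        exact heval1 Γ'' (fun j p hp => hsat'' j p (hsub' j hp))
    · exact hGuar W' hW'm


end Machine

def sigA : List (Fin 2 × Bool) → ℤ
  | [] => 0
  | ℓ :: L => (if ℓ.1 = 0 then (if ℓ.2 then 1 else -1) else 0) + sigA L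

def levM : List (Fin 2 × Bool) → List (ℤ × Bool)
  | [] => []
  | ℓ :: L => if ℓ.1 = 0 then levM L else (sigA L, ℓ.2) :: levM L

theorem fin2_eq_zero_or_one (i : Fin 2) : i = 0 ∨ i = 1 := by
  fin_cases i <;> simp

theorem sigA_abs : ∀ L : List (Fin 2 × Bool), |sigA L| ≤ (L.length : ℤ) := by
  intro L
  induction L with
  | nil => simp [sigA]
  | cons ℓ L' ih =>
    rw [sigA]
    have h1 : |(if ℓ.1 = 0 then (if ℓ.2 then (1:ℤ) else -1) else 0)| ≤ 1 := by
      split_ifs <;> simp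
    calc |(if ℓ.1 = 0 then (if ℓ.2 then (1:ℤ) else -1) else 0) + sigA L'|
        ≤ _ + |sigA L'| := abs_add_le _ _
      _ ≤ 1 + L'.length := add_le_add h1 ih
      _ ≤ ((ℓ :: L').length : ℤ) := by simp; omega

theorem sigA_allA : ∀ (L : List (Fin 2 × Bool)) (b : Bool),
    (((0 : Fin 2), b) :: L).Chain' (fun p q => p.1 = q.1 → p.2 = q.2) →
    (∀ ℓ ∈ L, ℓ.1 = (0 : Fin 2)) →
    sigA (((0 : Fin 2), b) :: L) = if b then (L.length + 1 : ℤ) else -(L.length + 1) := by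
  intro L
  induction L with
  | nil => intro b _ _; cases b <;> simp [sigA]
  | cons c L'' ih =>
    intro b hch hall
    have hc1 : c.1 = 0 := hall c (by simp)
    have hrel := (List.isChain_cons_cons.mp hch).1
    have hc2 : c.2 = b := (hrel hc1.symm).symm
    have hceq : c = ((0 : Fin 2), b) := by rw [← hc1, ← hc2]
    have hch' := (List.isChain_cons_cons.mp hch).2
    rw [hceq] at hch'
    have := ih b hch' (fun ℓ hℓ => hall ℓ (by simp [hℓ]))
    rw [sigA, hceq, this]
    cases b <;> simp <;> push_cast <;> ring

theorem levM_nil_allA : ∀ L : List (Fin 2 × Bool), levM L = [] → ∀ ℓ ∈ L, ℓ.1 = (0 : Fin 2) := by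
  intro L
  induction L with
  | nil => simp
  | cons c L' ih =>
    intro hnil ℓ hℓ
    rw [levM] at hnil
    by_cases hc : c.1 = 0
    · rw [if_pos hc] at hnil
      rcases List.mem_cons.mp hℓ with he | hm
      · rw [he]; exact hc
      · exact ih hnil ℓ hm
    · rw [if_neg hc] at hnil
      exact absurd hnil (List.cons_ne_nil _ _)

theorem levM_chain' : ∀ L : List (Fin 2 × Bool),
    L.Chain' (fun p q => p.1 = q.1 → p.2 = q.2) →
    (levM L).Chain' (fun p q => p.1 = q.1 → p.2 = q.2) ∧
    (∀ p ∈ (levM L).head?,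
      (L.head? = some ((1 : Fin 2), p.2) ∧ p.1 = sigA L) ∨
      (∃ b, L.head? = some ((0 : Fin 2), b) ∧
        (if b then p.1 < sigA L else sigA L < p.1))) := by
  intro L
  induction L with
  | nil => intro _; simp [levM]; exact List.isChain_nil
  | cons ℓ L' ih =>
    intro hch
    obtain ⟨hadj, hch'⟩ := List.isChain_cons.mp hch
    obtain ⟨ihc, ihh⟩ := ih hch'
    rcases fin2_eq_zero_or_one ℓ.1 with h0 | h1
    · -- a-letter
      have hlev : levM (ℓ :: L') = levM L' := by rw [levM, if_pos h0]
      rw [hlev]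
      refine ⟨ihc, ?_⟩
      intro p hp
      have hsig : sigA (ℓ :: L') = (if ℓ.2 then 1 else -1) + sigA L' := by
        rw [sigA, if_pos h0]
      refine Or.inr ⟨ℓ.2, ?_, ?_⟩
      · rw [List.head?_cons]
        congr 1
        rw [← h0]
      · rcases ihh p hp with ⟨hh, hpe⟩ | ⟨b', hh', hlt⟩
        · -- p.1 = sigA L'
          cases hb : ℓ.2 <;> simp [hb, hsig] <;> omega
        · -- L' starts with a-letter of sign b'; same sign as ℓ.2
          have hb'2 : b' = ℓ.2 := by
            have := hadj ((0 : Fin 2), b') (by rw [hh']; rfl)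
            have h2 := this (by rw [h0])
            exact h2.symm
          rw [hb'2] at hlt
          cases hb : ℓ.2 <;> rw [hb] at hlt <;> simp [hb, hsig] at hlt ⊢ <;> omega
    · -- b-letter
      have hlev : levM (ℓ :: L') = (sigA L', ℓ.2) :: levM L' := by
        rw [levM, if_neg (by rw [h1]; exact one_ne_zero)]
      have hsig : sigA (ℓ :: L') = sigA L' := by
        rw [sigA, if_neg (by rw [h1]; exact one_ne_zero), zero_add]
      rw [hlev]
      constructor
      · show List.IsChain _ _
        rw [List.isChain_cons]
        refine ⟨?_, ihc⟩
        intro p hp hfst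
        rcases ihh p hp with ⟨hh, hpe⟩ | ⟨b', hh', hlt⟩
        · -- next b-letter is head of L'
          have := hadj ((1 : Fin 2), p.2) (by rw [hh]; rfl)
          have h2 := this (by rw [h1])
          exact h2
        · -- strict inequality contradicts equality of levels
          exfalso
          simp only at hfst
          cases hb : b' <;> rw [hb] at hlt <;> simp at hlt <;> omega
      · intro p hp
        rw [List.head?_cons] at hp
        have hpe : p = (sigA L', ℓ.2) := (Option.some.inj (Option.mem_def.mp hp)).symm
        left
        constructor
        · rw [List.head?_cons]
          congr 1
          rw [hpe]
          simp only
          rw [← h1]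
        · rw [hpe, hsig]


theorem fixesOutside_smul_mem' {G X : Type*} [Group G] [MulAction G X] {U : Set X} {γ : G}
    (hγ : ∀ x, x ∉ U → γ • x = x) {x : X} (hx : x ∈ U) : γ • x ∈ U := by
  by_contra hmem
  have h2 : γ • x = x := smul_left_cancel γ (hγ _ hmem)
  rw [h2] at hmem
  exact hmem hx

theorem conj_prod_eval {G X : Type*} [Group G] [MulAction G X] {U : Set X}
    (h : G) (n : ℕ)
    (hwand : ∀ d : ℤ, d ≠ 0 → -(2*(n:ℤ)) ≤ d → d ≤ 2*n → ∀ u ∈ U, h ^ d • u ∉ U)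
    (Θ : ℤ → G) (hΘ : ∀ j : ℤ, ∀ x, x ∉ U → Θ j • x = x) :
    ∀ lst : List ℤ, lst.Nodup → (∀ j ∈ lst, -(n:ℤ) ≤ j ∧ j ≤ n) →
    ∀ k : ℤ, -(n:ℤ) ≤ k → k ≤ n → ∀ u ∈ U,
      ((lst.map fun j => h ^ j * Θ j * (h ^ j)⁻¹).prod) • (h ^ k • u)
        = h ^ k • ((if k ∈ lst then Θ k else 1) • u) := by
  intro lst
  induction lst with
  | nil => intro _ _ k _ _ u _; simp
  | cons j rest ih =>
    intro hnd hbd k hk1 hk2 u hu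
    have hin := ih hnd.of_cons (fun j' hj' => hbd j' (by simp [hj'])) k hk1 hk2 u hu
    rw [List.map_cons, List.prod_cons, mul_smul, hin]
    set w₁ : G := if k ∈ rest then Θ k else 1 with hw₁def
    have hu₁ : w₁ • u ∈ U := by
      rw [hw₁def]
      split_ifs
      · exact fixesOutside_smul_mem' (hΘ k) hu
      · rw [one_smul]; exact hu
    have hstep : (h ^ j * Θ j * (h ^ j)⁻¹) • (h ^ k • (w₁ • u))
        = h ^ j • (Θ j • (h ^ (k - j) • (w₁ • u))) := by
      rw [mul_smul, mul_smul]
      congr 2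
      rw [← zpow_neg, smul_smul, ← zpow_add]
      congr 2
      ring
    rw [hstep]
    by_cases hjk : j = k
    · subst hjk
      have hjrest : j ∉ rest := (List.nodup_cons.mp hnd).1
      rw [if_pos (List.mem_cons_self)]
      rw [sub_self, zpow_zero, one_smul, hw₁def, if_neg hjrest, one_smul]
    · have hd0 : k - j ≠ 0 := sub_ne_zero.mpr (Ne.symm hjk)
      obtain ⟨hj1, hj2⟩ := hbd j (by simp)
      have hnotU : h ^ (k - j) • (w₁ • u) ∉ U :=
        hwand (k - j) hd0 (by omega) (by omega) _ hu₁
      rw [hΘ j _ hnotU, smul_smul, ← zpow_add]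
      have : j + (k - j) = k := by ring
      rw [this]
      by_cases hkr : k ∈ rest
      · rw [hw₁def, if_pos hkr, if_pos (by simp [hkr])]
      · rw [hw₁def, if_neg hkr,
          if_neg (by simp [List.mem_cons, hkr, Ne.symm hjk])]


/-- **Statement 9.** Let the group `G` act faithfully by homeomorphisms on a perfect metric
space `X` (no isolated points), with finitely many global fixed points, such that the action
hereditarily separates `X`. If `h ∈ G` has infinite order and `supp (h^ℓ) = supp h` for every
`ℓ ≠ 0`, then for every finite set `S` of nontrivial elements of the free group on `a, b` there
is `g ∈ G` such that the homomorphism `F₂ → G`, `a ↦ h`, `b ↦ g`, kills no element of `S`.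
(Hence `{h, g}` freely generates a free subgroup in a suitable limit group over `G`.) -/
theorem exists_free_pair_of_hereditarilySeparates
    {G X : Type*} [Group G] [MetricSpace X] [MulAction G X] [FaithfulSMul G X]
    (hperf : ∀ x : X, x ∈ closure ({x}ᶜ : Set X))
    (hcont : ∀ g : G, Continuous fun x : X => g • x)
    (hfix : (MulAction.fixedPoints G X).Finite)
    (hsep : HereditarilySeparates G X)
    (h : G) (hord : ∀ n : ℕ, 0 < n → h ^ n ≠ 1)
    (hsupp : ∀ ℓ : ℤ, ℓ ≠ 0 → actSupp G X (h ^ ℓ) = actSupp G X h)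
    (S : Finset (FreeGroup (Fin 2))) (hS : ∀ w ∈ S, w ≠ 1) :
    ∃ g : G, ∀ w ∈ S, FreeGroup.lift ![h, g] w ≠ 1 := by
  classical
  rcases S.eq_empty_or_nonempty with hSe | hSne
  · subst hSe; exact ⟨1, by simp⟩
  obtain ⟨w₀, hw₀⟩ := hSne
  have hne1 : h ≠ 1 := by simpa using hord 1 one_pos
  have hx₀' : ∃ x : X, h • x ≠ x := by
    by_contra hc; push_neg at hc
    exact hne1 (FaithfulSMul.eq_of_smul_eq_smul (fun x => by rw [hc x, one_smul]))
  obtain ⟨x₀, hx₀⟩ := hx₀'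
  set n : ℕ := S.sup (fun w => w.toWord.length) with hn
  have hn1 : 1 ≤ n := by
    have h1 : 1 ≤ w₀.toWord.length := by
      rcases hLw : w₀.toWord with _ | ⟨c, t⟩
      · exact absurd (FreeGroup.toWord_eq_nil_iff.mp hLw) (hS w₀ hw₀)
      · simp
    refine le_trans h1 ?_
    rw [hn]
    exact Finset.le_sup (f := fun w => w.toWord.length) hw₀
  have hInj : ∀ d : ℤ, d ≠ 0 → h ^ d • x₀ ≠ x₀ := by
    intro d hd he
    have hmem : x₀ ∈ actSupp G X h := hx₀
    rw [← hsupp d hd] at hmem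
    exact hmem he
  set y : ℤ → X := fun k => h ^ k • x₀ with hy
  have hyinj : ∀ k l : ℤ, k ≠ l → y k ≠ y l := by
    intro k l hkl he
    apply hInj (k - l) (sub_ne_zero.mpr hkl)
    have h2 := congrArg (fun z => (h ^ l)⁻¹ • z) he
    simp only [hy] at h2
    rw [smul_smul, smul_smul, ← zpow_neg, ← zpow_add, ← zpow_add] at h2
    rw [show (-l + l : ℤ) = 0 by ring, zpow_zero, one_smul] at h2
    rw [show (-l + k : ℤ) = k - l by ring] at h2
    exact h2
  set K : Finset ℤ := Finset.Icc (-(2 * (n : ℤ))) (2 * n) with hK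
  set Q : Finset (ℤ × ℤ) := (K ×ˢ K).filter (fun p : ℤ × ℤ => p.1 ≠ p.2) with hQ
  have hQne : Q.Nonempty := by
    refine ⟨((0 : ℤ), (1 : ℤ)), ?_⟩
    rw [hQ, Finset.mem_filter, Finset.mem_product, hK, Finset.mem_Icc, Finset.mem_Icc]
    refine ⟨⟨⟨by omega, by omega⟩, ⟨by omega, by omega⟩⟩, by simp⟩
  set D : ℝ := Q.inf' hQne (fun p => dist (y p.1) (y p.2)) with hD
  have hDpos : 0 < D := by
    rw [hD, Finset.lt_inf'_iff]
    intro p hp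
    exact dist_pos.mpr (hyinj _ _ (Finset.mem_filter.mp hp).2)
  have hDle : ∀ k l : ℤ, k ∈ K → l ∈ K → k ≠ l → D ≤ dist (y k) (y l) := by
    intro k l hk hl hne
    have hmem' : ((k, l) : ℤ × ℤ) ∈ Q := by
      rw [hQ, Finset.mem_filter, Finset.mem_product]
      exact ⟨⟨hk, hl⟩, hne⟩
    rw [hD]
    exact Finset.inf'_le _ hmem'
  set U : Set X := {x | ∀ k ∈ K, dist (h ^ k • x) (y k) < D / 3} ∩
      (MulAction.fixedPoints G X)ᶜ with hU
  have hUo : IsOpen U := by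
    apply IsOpen.inter
    · have heq : {x : X | ∀ k ∈ K, dist (h ^ k • x) (y k) < D / 3}
          = ⋂ k ∈ K, (fun x : X => h ^ k • x) ⁻¹' (Metric.ball (y k) (D / 3)) := by
        ext x; simp [Metric.mem_ball]
      rw [heq]
      exact isOpen_biInter_finset (fun k _ => (Metric.isOpen_ball).preimage (hcont (h ^ k)))
    · exact hfix.isClosed.isOpen_compl
  have hx₀U : x₀ ∈ U := by
    constructor
    · intro k _
      rw [hy]
      simp only [dist_self]
      linarith
    · intro hmem
      exact hx₀ (hmem h)
  have hUi : U.Infinite := infinite_of_open_nonempty hperf hUo ⟨x₀, hx₀U⟩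
  have hUf : ∀ x ∈ U, x ∉ MulAction.fixedPoints G X := fun x hx => hx.2
  have hwand : ∀ d : ℤ, d ≠ 0 → -(2 * (n : ℤ)) ≤ d → d ≤ 2 * n →
      ∀ u ∈ U, h ^ d • u ∉ U := by
    intro d hd hd1 hd2 u hu hmem
    have h1 : dist (h ^ d • u) (y d) < D / 3 :=
      hu.1 d (Finset.mem_Icc.mpr ⟨hd1, hd2⟩)
    have h2 : dist (h ^ (0 : ℤ) • (h ^ d • u)) (y 0) < D / 3 :=
      hmem.1 0 (Finset.mem_Icc.mpr ⟨by omega, by omega⟩)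
    rw [zpow_zero, one_smul] at h2
    have h3 : D ≤ dist (y d) (y 0) :=
      hDle d 0 (Finset.mem_Icc.mpr ⟨hd1, hd2⟩) (Finset.mem_Icc.mpr ⟨by omega, by omega⟩) hd
    have h4 := dist_triangle (y d) (h ^ d • u) (y 0)
    rw [dist_comm (y d) (h ^ d • u)] at h4
    linarith
  set rel : (ℤ × Bool) → (ℤ × Bool) → Prop := fun p q => p.1 = q.1 → p.2 = q.2 with hrel
  set Ws : List (List (ℤ × Bool)) :=
    (S.toList.map (fun w => levM w.toWord)).filter (fun W => !W.isEmpty) with hWs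
  have hWsgood : ∀ W ∈ Ws, W ≠ [] ∧ W.Chain' rel := by
    intro W hW
    rw [hWs, List.mem_filter] at hW
    obtain ⟨hW1, hW2⟩ := hW
    constructor
    · intro hnil; rw [hnil] at hW2; simp at hW2
    · obtain ⟨w, _, hweq⟩ := List.mem_map.mp hW1
      rw [← hweq]
      exact (levM_chain' w.toWord (chain'_toWord w)).1
  obtain ⟨Γ', R', P', hval', hsat', hsub', hGuar⟩ :=
    outer_lemma hsep hUo hUi hUf Ws hWsgood (fun _ => (1 : G)) (fun _ => (∅ : Set (X × X))) ∅
      ⟨fun j x _ => one_smul G x, Set.finite_empty, Set.empty_subset U,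
        fun j => Set.finite_empty, fun j p hp => absurd hp (Set.notMem_empty p)⟩
      (fun j p hp => absurd hp (Set.notMem_empty p))
  obtain ⟨lvls, hlvnd, hlvmem⟩ : ∃ lvls : List ℤ, lvls.Nodup ∧
      ∀ k : ℤ, k ∈ lvls ↔ (-(n : ℤ) ≤ k ∧ k ≤ n) := by
    refine ⟨(List.range (2 * n + 1)).map (fun i : ℕ => (i : ℤ) - (n : ℤ)), ?_, ?_⟩
    · refine List.Nodup.map ?_ (List.nodup_range)
      intro a b hab
      simp only at hab
      omega
    · intro k
      rw [List.mem_map]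
      constructor
      · rintro ⟨i, hi, rfl⟩
        have hi' := List.mem_range.mp hi
        omega
      · rintro ⟨hk1, hk2⟩
        exact ⟨(k + n).toNat, List.mem_range.mpr (by omega), by omega⟩
  set g : G := ((lvls.map (fun k => h ^ k * Γ' k * (h ^ k)⁻¹)).prod) with hg
  refine ⟨g, ?_⟩
  have hΓU : ∀ j : ℤ, ∀ x, x ∉ U → Γ' j • x = x := hval'.1
  have hgact : ∀ k : ℤ, -(n : ℤ) ≤ k → k ≤ n → ∀ u ∈ U,
      g • (h ^ k • u) = h ^ k • (Γ' k • u) := by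
    intro k hk1 hk2 u hu
    rw [hg, conj_prod_eval h n hwand Γ' hΓU lvls hlvnd
      (fun j hj => (hlvmem j).mp hj) k hk1 hk2 u hu,
      if_pos ((hlvmem k).mpr ⟨hk1, hk2⟩)]
  have hginvact : ∀ k : ℤ, -(n : ℤ) ≤ k → k ≤ n → ∀ u ∈ U,
      g⁻¹ • (h ^ k • u) = h ^ k • ((Γ' k)⁻¹ • u) := by
    intro k hk1 hk2 u hu
    have hginv : g⁻¹ = ((lvls.reverse.map (fun k => h ^ k * (Γ' k)⁻¹ * (h ^ k)⁻¹)).prod) := by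
      rw [hg, List.prod_inv_reverse]
      congr 1
      rw [List.map_map, ← List.map_reverse]
      apply List.map_congr_left
      intro a _
      simp [mul_inv_rev, mul_assoc]
    rw [hginv, conj_prod_eval h n hwand (fun j => (Γ' j)⁻¹)
      (fun j => fixesOutside_inv (hΓU j)) lvls.reverse (List.nodup_reverse.mpr hlvnd)
      (fun j hj => (hlvmem j).mp (List.mem_reverse.mp hj)) k hk1 hk2 u hu,
      if_pos (List.mem_reverse.mpr ((hlvmem k).mpr ⟨hk1, hk2⟩))]
  have hPU : ∀ W : List (ℤ × Bool), ∀ u ∈ U, ((W.map (evW Γ')).prod) • u ∈ U := by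
    intro W
    induction W with
    | nil => intro u hu; simpa using hu
    | cons ℓ t iht =>
      intro u hu
      rw [List.map_cons, List.prod_cons, mul_smul]
      have hmem := iht u hu
      rw [evW]
      split_ifs
      · exact fixesOutside_smul_mem' (hΓU ℓ.1) hmem
      · exact fixesOutside_smul_mem' (fixesOutside_inv (hΓU ℓ.1)) hmem
  have hT : ∀ L : List (Fin 2 × Bool), (L.length : ℤ) ≤ n → ∀ u ∈ U,
      ((L.map (fun x => cond x.2 (![h, g] x.1) (![h, g] x.1)⁻¹)).prod) • u
        = h ^ (sigA L) • (((levM L).map (evW Γ')).prod • u) := by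
    intro L
    induction L with
    | nil => intro _ u _; simp [sigA, levM]
    | cons ℓ L' ihL =>
      intro hlen u hu
      have hlen' : (L'.length : ℤ) ≤ n := by
        rw [List.length_cons] at hlen; push_cast at hlen ⊢; omega
      rw [List.map_cons, List.prod_cons, mul_smul, ihL hlen' u hu]
      rcases fin2_eq_zero_or_one ℓ.1 with h0 | h1
      · have hM : ![h, g] ℓ.1 = h := by rw [h0]; rfl
        have hsig : sigA (ℓ :: L') = (if ℓ.2 then 1 else -1) + sigA L' := by
          rw [sigA, if_pos h0]
        have hlev : levM (ℓ :: L') = levM L' := by rw [levM, if_pos h0]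
        rw [hM, hlev, hsig]
        cases hb : ℓ.2
        · simp only [hb, cond_false, if_neg Bool.false_ne_true]
          rw [← zpow_neg_one, smul_smul, ← zpow_add]
        · simp only [hb, cond_true]
          nth_rewrite 1 [← zpow_one h]
          rw [smul_smul, ← zpow_add]
          simp
      · have hM : ![h, g] ℓ.1 = g := by
          rw [h1, Matrix.cons_val_one, Matrix.cons_val_zero]
        have habs := abs_le.mp (sigA_abs L')
        have hs1 : -(n : ℤ) ≤ sigA L' := by omega
        have hs2 : sigA L' ≤ n := by omega
        have hu₂ : ((levM L').map (evW Γ')).prod • u ∈ U := hPU _ u hu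
        have h1ne : ℓ.1 ≠ 0 := by rw [h1]; exact one_ne_zero
        have hsig : sigA (ℓ :: L') = sigA L' := by
          rw [sigA, if_neg h1ne, zero_add]
        have hlev : levM (ℓ :: L') = (sigA L', ℓ.2) :: levM L' := by
          rw [levM, if_neg h1ne]
        rw [hM, hsig, hlev, List.map_cons, List.prod_cons, mul_smul]
        cases hb : ℓ.2
        · simp only [hb, cond_false]
          rw [hginvact (sigA L') hs1 hs2 _ hu₂]
          congr 1
        · simp only [hb, cond_true]
          rw [hgact (sigA L') hs1 hs2 _ hu₂]
          congr 1
  intro w hw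
  have hch := chain'_toWord w
  have hlen : ((FreeGroup.toWord w).length : ℤ) ≤ n := by
    exact_mod_cast Finset.le_sup (f := fun w => w.toWord.length) hw
  have hlift : FreeGroup.lift ![h, g] w
      = (((FreeGroup.toWord w).map
          (fun x => cond x.2 (![h, g] x.1) (![h, g] x.1)⁻¹)).prod) := by
    conv_lhs => rw [← FreeGroup.mk_toWord (x := w)]
    rw [FreeGroup.lift_mk]
  by_cases hσ : sigA (FreeGroup.toWord w) = 0
  · have hMne : levM (FreeGroup.toWord w) ≠ [] := by
      intro hnil
      have hall := levM_nil_allA _ hnil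
      rcases hL : FreeGroup.toWord w with _ | ⟨c, t⟩
      · exact hS w hw (FreeGroup.toWord_eq_nil_iff.mp hL)
      · have hc1 : c.1 = 0 := hall c (by rw [hL]; simp)
        have hceq : c = ((0 : Fin 2), c.2) := by rw [← hc1]
        have hsall := sigA_allA t c.2
          (by rw [← hceq, ← hL]; exact hch)
          (fun ℓ hℓ => hall ℓ (by rw [hL]; simp [hℓ]))
        rw [hL] at hσ
        rw [hceq, hsall] at hσ
        cases hb : c.2 <;> rw [hb] at hσ <;> simp at hσ <;> omega
    have hmemWs : levM (FreeGroup.toWord w) ∈ Ws := by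
      rw [hWs]
      apply List.mem_filter.mpr
      refine ⟨List.mem_map.mpr ⟨w, Finset.mem_toList.mpr hw, rfl⟩, ?_⟩
      simp [hMne]
    obtain ⟨p, v, hpU, hpv, heval⟩ := hGuar _ hmemWs
    intro h1
    have hcontra : FreeGroup.lift ![h, g] w • p = p := by rw [h1, one_smul]
    rw [hlift, hT (FreeGroup.toWord w) hlen p hpU, hσ, zpow_zero, one_smul,
      heval Γ' hsat'] at hcontra
    exact hpv hcontra.symm
  · intro h1
    have hcontra : FreeGroup.lift ![h, g] w • x₀ = x₀ := by rw [h1, one_smul]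
    rw [hlift, hT (FreeGroup.toWord w) hlen x₀ hx₀U] at hcontra
    have hin : ((levM (FreeGroup.toWord w)).map (evW Γ')).prod • x₀ ∈ U :=
      hPU _ x₀ hx₀U
    have habs := abs_le.mp (sigA_abs (FreeGroup.toWord w))
    have hnot : h ^ (sigA (FreeGroup.toWord w)) •
        (((levM (FreeGroup.toWord w)).map (evW Γ')).prod • x₀) ∉ U :=
      hwand _ hσ (by omega) (by omega) _ hin
    rw [hcontra] at hnot
    exact hnot hx₀U

end
end

section
/- For every nontrivial order-automorphism h of (ℚ, <) and every finite set S of nontrivial elements of the free group F₂ on two generators a, b, there exists an order-automorphism g of ℚ such that the homomorphism F₂ → A(ℚ) determined by a ↦ h, b ↦ g sends no element of S to 1. (Hence there is a limit group ⟨A(ℚ), g⟩ over A(ℚ) in which {h, g} is a free basis of a free subgroup of rank 2.) -/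
namespace OrderAutQFree

variable {h : ℚ ≃o ℚ}

lemma mul_apply (f g : ℚ ≃o ℚ) (x : ℚ) : (f * g) x = f (g x) := rfl

lemma one_apply (x : ℚ) : (1 : ℚ ≃o ℚ) x = x := rfl

lemma zpow_apply_add (k l : ℤ) (x : ℚ) : (h ^ (k + l)) x = (h ^ k) ((h ^ l) x) := by
  rw [zpow_add]; rfl

lemma zpow_succ_apply (k : ℤ) (x : ℚ) : (h ^ (k + 1)) x = (h ^ k) (h x) := by
  rw [zpow_add_one]; rfl

lemma apply_zpow_comm (k : ℤ) (x : ℚ) : h ((h ^ k) x) = (h ^ k) (h x) := by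
  have e : h * h ^ k = h ^ k * h := by
    rw [← zpow_one_add, ← zpow_add_one, add_comm]
  calc h ((h ^ k) x) = (h * h ^ k) x := rfl
    _ = (h ^ k * h) x := by rw [e]
    _ = (h ^ k) (h x) := rfl

lemma zpow_zero_apply (x : ℚ) : (h ^ (0 : ℤ)) x = x := by
  rw [zpow_zero]; rfl

lemma zpow_apply_injective {q : ℚ} (hq : h q ≠ q) :
    Function.Injective fun k : ℤ => (h ^ k) q := by
  rcases lt_or_gt_of_ne hq.symm with hlt | hgt
  · have : StrictMono fun k : ℤ => (h ^ k) q := by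
      apply strictMono_int_of_lt_succ
      intro k
      rw [zpow_succ_apply]
      exact (h ^ k).strictMono hlt
    exact this.injective
  · have : StrictAnti fun k : ℤ => (h ^ k) q := by
      apply strictAnti_int_of_succ_lt
      intro k
      rw [zpow_succ_apply]
      exact (h ^ k).strictMono hgt
    exact this.injective

lemma zpow_mem_supp {q : ℚ} (hq : h q ≠ q) (k : ℤ) : h ((h ^ k) q) ≠ (h ^ k) q := by
  rw [apply_zpow_comm]
  intro e
  exact hq ((h ^ k).injective e)

lemma zpow_apply_ne_self {q : ℚ} (hq : h q ≠ q) {k : ℤ} (hk : k ≠ 0) : (h ^ k) q ≠ q := by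
  intro e
  apply hk
  exact zpow_apply_injective hq (a₁ := k) (a₂ := 0) (by simpa [zpow_zero_apply] using e)

lemma supp_right {u : ℚ} (hu : h u ≠ u) : ∃ v, u < v ∧ ∀ x, u < x → x < v → h x ≠ x := by
  rcases lt_or_gt_of_ne hu with hlt | hgt
  · -- h u < u, use v = h.symm u
    refine ⟨h.symm u, by simpa using h.symm.strictMono hlt, ?_⟩
    intro x hx1 hx2
    have : h x < u := by simpa using h.strictMono hx2
    exact ne_of_lt (this.trans hx1)
  · -- u < h u, use v = h u
    refine ⟨h u, hgt, ?_⟩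
    intro x hx1 hx2
    have : h u < h x := h.strictMono hx1
    exact (hx2.trans this).ne'

lemma supp_left {u : ℚ} (hu : h u ≠ u) : ∃ v, v < u ∧ ∀ x, v < x → x < u → h x ≠ x := by
  rcases lt_or_gt_of_ne hu with hlt | hgt
  · -- h u < u, use v = h u
    refine ⟨h u, hlt, ?_⟩
    intro x hx1 hx2
    have : h x < h u := h.strictMono hx2
    exact ne_of_lt (this.trans hx1)
  · -- u < h u, use v = h.symm u
    refine ⟨h.symm u, by simpa using h.symm.strictMono hgt, ?_⟩
    intro x hx1 hx2
    have : u < h x := by simpa using h.strictMono hx1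
    exact (hx2.trans this).ne'

lemma exists_fresh (hh : h ≠ 1) (A B E : Finset ℚ)
    (hA : ∀ a ∈ A, h a ≠ a) (hB : ∀ b ∈ B, h b ≠ b)
    (hAB : ∀ a ∈ A, ∀ b ∈ B, a < b) :
    ∃ y, h y ≠ y ∧ y ∉ E ∧ (∀ a ∈ A, a < y) ∧ (∀ b ∈ B, y < b) := by
  obtain ⟨u, v, huv, hsub, hua, hvb⟩ :
      ∃ u v, u < v ∧ (∀ x, u < x → x < v → h x ≠ x) ∧
        (∀ a ∈ A, a ≤ u) ∧ (∀ b ∈ B, v ≤ b) := by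
    rcases A.eq_empty_or_nonempty with rfl | hAne
    · rcases B.eq_empty_or_nonempty with rfl | hBne
      · obtain ⟨q, hq⟩ : ∃ q, h q ≠ q := by
          by_contra hcon
          push_neg at hcon
          exact hh (by ext x; exact hcon x)
        obtain ⟨v, hv1, hv2⟩ := supp_right hq
        exact ⟨q, v, hv1, hv2, by simp, by simp⟩
      · set w := B.min' hBne with hw
        have hwB : w ∈ B := B.min'_mem hBne
        obtain ⟨u, hu1, hu2⟩ := supp_left (hB w hwB)
        exact ⟨u, w, hu1, hu2, by simp, fun b hb => B.min'_le b hb⟩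
    · set u := A.max' hAne with hudef
      have huA : u ∈ A := A.max'_mem hAne
      obtain ⟨v₀, hv₀1, hv₀2⟩ := supp_right (hA u huA)
      rcases B.eq_empty_or_nonempty with rfl | hBne
      · exact ⟨u, v₀, hv₀1, hv₀2, fun a ha => A.le_max' a ha, by simp⟩
      · set w := B.min' hBne with hwdef
        have huw : u < w := hAB u huA w (B.min'_mem hBne)
        refine ⟨u, min v₀ w, lt_min hv₀1 huw, ?_, fun a ha => A.le_max' a ha,
          fun b hb => le_trans (min_le_right _ _) (B.min'_le b hb)⟩
        intro x hx1 hx2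
        exact hv₀2 x hx1 (hx2.trans_le (min_le_left _ _))
  have hinf : (Set.Ioo u v).Infinite := Set.infinite_coe_iff.1 (Set.Ioo.infinite huv)
  obtain ⟨y, hy, hyE⟩ := hinf.exists_notMem_finset E
  exact ⟨y, hsub y hy.1 hy.2, hyE,
    fun a ha => (hua a ha).trans_lt hy.1, fun b hb => hy.2.trans_le (hvb b hb)⟩


variable {h : ℚ ≃o ℚ}

def domF (p : Finset (ℚ × ℚ)) : Finset ℚ := p.image Prod.fst
def ranF (p : Finset (ℚ × ℚ)) : Finset ℚ := p.image Prod.snd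

def Mono (p : Finset (ℚ × ℚ)) : Prop :=
  ∀ a ∈ p, ∀ b ∈ p, cmp a.1 b.1 = cmp a.2 b.2

lemma fst_mem_domF {p : Finset (ℚ × ℚ)} {pr : ℚ × ℚ} (hpr : pr ∈ p) : pr.1 ∈ domF p :=
  Finset.mem_image_of_mem _ hpr

lemma snd_mem_ranF {p : Finset (ℚ × ℚ)} {pr : ℚ × ℚ} (hpr : pr ∈ p) : pr.2 ∈ ranF p :=
  Finset.mem_image_of_mem _ hpr

lemma domF_insert (c y : ℚ) (p : Finset (ℚ × ℚ)) :
    domF (insert (c, y) p) = insert c (domF p) := Finset.image_insert _ _ _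

lemma ranF_insert (c y : ℚ) (p : Finset (ℚ × ℚ)) :
    ranF (insert (c, y) p) = insert y (ranF p) := Finset.image_insert _ _ _

lemma cmp_eq_of_iff {a b a' b' : ℚ} (H1 : a < b ↔ a' < b') (H2 : b < a ↔ b' < a') :
    cmp a b = cmp a' b' := by
  rcases lt_trichotomy a b with hlt | heq | hgt
  · rw [(cmp_eq_lt_iff _ _).2 hlt, (cmp_eq_lt_iff _ _).2 (H1.1 hlt)]
  · have h1 : ¬ a' < b' := fun hc => by simp [heq] at H1; exact absurd hc (by simpa [heq] using H1)
    have h2 : ¬ b' < a' := fun hc => by simp [heq] at H2; exact absurd hc (by simpa [heq] using H2)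
    have : a' = b' := le_antisymm (not_lt.1 h2) (not_lt.1 h1)
    rw [heq, this, cmp_self_eq_eq, cmp_self_eq_eq]
  · rw [(cmp_eq_gt_iff _ _).2 hgt, (cmp_eq_gt_iff _ _).2 (H2.1 hgt)]

lemma mono_insert_of {p : Finset (ℚ × ℚ)} {c y : ℚ} (hp : Mono p)
    (hne : ∀ pr ∈ p, pr.1 ≠ c)
    (hlt : ∀ pr ∈ p, pr.1 < c → pr.2 < y) (hgt : ∀ pr ∈ p, c < pr.1 → y < pr.2) :
    Mono (insert (c, y) p) := by
  have key : ∀ pr ∈ p, (pr.1 < c ↔ pr.2 < y) ∧ (c < pr.1 ↔ y < pr.2) := by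
    intro pr hpr
    constructor
    · refine ⟨hlt pr hpr, fun hy => ?_⟩
      rcases lt_trichotomy pr.1 c with hc | hc | hc
      · exact hc
      · exact absurd hc (hne pr hpr)
      · exact absurd (hgt pr hpr hc) (asymm hy)
    · refine ⟨hgt pr hpr, fun hy => ?_⟩
      rcases lt_trichotomy pr.1 c with hc | hc | hc
      · exact absurd (hlt pr hpr hc) (asymm hy)
      · exact absurd hc (hne pr hpr)
      · exact hc
  intro a ha b hb
  rcases Finset.mem_insert.1 ha with rfl | ha <;> rcases Finset.mem_insert.1 hb with rfl | hb
  · simp [cmp_self_eq_eq]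
  · exact cmp_eq_of_iff ((key b hb).2) ((key b hb).1)
  · exact cmp_eq_of_iff ((key a ha).1) ((key a ha).2)
  · exact hp a ha b hb

/-- Insert a new pair `(c, y)` with fresh second coordinate `y`. -/
lemma extend_right (hh : h ≠ 1) (p : Finset (ℚ × ℚ)) (hp : Mono p)
    (hsupp : ∀ x ∈ domF p ∪ ranF p, h x ≠ x) {c : ℚ} (hcd : c ∉ domF p) (E : Finset ℚ) :
    ∃ y, h y ≠ y ∧ y ∉ E ∧ Mono (insert (c, y) p) := by
  obtain ⟨y, hy1, hy2, hy3, hy4⟩ := exists_fresh hh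
    ((p.filter fun pr => pr.1 < c).image Prod.snd)
    ((p.filter fun pr => c < pr.1).image Prod.snd) E
    (by
      intro a ha
      obtain ⟨pr, hpr, rfl⟩ := Finset.mem_image.1 ha
      exact hsupp _ (Finset.mem_union_right _ (snd_mem_ranF (Finset.mem_filter.1 hpr).1)))
    (by
      intro b hb
      obtain ⟨pr, hpr, rfl⟩ := Finset.mem_image.1 hb
      exact hsupp _ (Finset.mem_union_right _ (snd_mem_ranF (Finset.mem_filter.1 hpr).1)))
    (by
      intro a ha b hb
      obtain ⟨pa, hpa, rfl⟩ := Finset.mem_image.1 ha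
      obtain ⟨pb, hpb, rfl⟩ := Finset.mem_image.1 hb
      obtain ⟨hpa, hpac⟩ := Finset.mem_filter.1 hpa
      obtain ⟨hpb, hpbc⟩ := Finset.mem_filter.1 hpb
      exact (lt_iff_lt_of_cmp_eq_cmp (hp pa hpa pb hpb)).1 (hpac.trans hpbc))
  refine ⟨y, hy1, hy2, mono_insert_of hp ?_ ?_ ?_⟩
  · intro pr hpr he
    exact hcd (he ▸ fst_mem_domF hpr)
  · intro pr hpr hc
    exact hy3 _ (Finset.mem_image_of_mem _ (Finset.mem_filter.2 ⟨hpr, hc⟩))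
  · intro pr hpr hc
    exact hy4 _ (Finset.mem_image_of_mem _ (Finset.mem_filter.2 ⟨hpr, hc⟩))

lemma mono_insert_of' {p : Finset (ℚ × ℚ)} {c y : ℚ} (hp : Mono p)
    (hne : ∀ pr ∈ p, pr.2 ≠ c)
    (hlt : ∀ pr ∈ p, pr.2 < c → pr.1 < y) (hgt : ∀ pr ∈ p, c < pr.2 → y < pr.1) :
    Mono (insert (y, c) p) := by
  have key : ∀ pr ∈ p, (pr.2 < c ↔ pr.1 < y) ∧ (c < pr.2 ↔ y < pr.1) := by
    intro pr hpr
    constructor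
    · refine ⟨hlt pr hpr, fun hy => ?_⟩
      rcases lt_trichotomy pr.2 c with hc | hc | hc
      · exact hc
      · exact absurd hc (hne pr hpr)
      · exact absurd (hgt pr hpr hc) (asymm hy)
    · refine ⟨hgt pr hpr, fun hy => ?_⟩
      rcases lt_trichotomy pr.2 c with hc | hc | hc
      · exact absurd (hlt pr hpr hc) (asymm hy)
      · exact absurd hc (hne pr hpr)
      · exact hc
  intro a ha b hb
  rcases Finset.mem_insert.1 ha with rfl | ha <;> rcases Finset.mem_insert.1 hb with rfl | hb
  · simp [cmp_self_eq_eq]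
  · exact cmp_eq_of_iff ((key b hb).2).symm ((key b hb).1).symm
  · exact cmp_eq_of_iff ((key a ha).1).symm ((key a ha).2).symm
  · exact hp a ha b hb

/-- Insert a new pair `(y, c)` with fresh first coordinate `y`. -/
lemma extend_left (hh : h ≠ 1) (p : Finset (ℚ × ℚ)) (hp : Mono p)
    (hsupp : ∀ x ∈ domF p ∪ ranF p, h x ≠ x) {c : ℚ} (hcr : c ∉ ranF p) (E : Finset ℚ) :
    ∃ y, h y ≠ y ∧ y ∉ E ∧ Mono (insert (y, c) p) := by
  obtain ⟨y, hy1, hy2, hy3, hy4⟩ := exists_fresh hh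
    ((p.filter fun pr => pr.2 < c).image Prod.fst)
    ((p.filter fun pr => c < pr.2).image Prod.fst) E
    (by
      intro a ha
      obtain ⟨pr, hpr, rfl⟩ := Finset.mem_image.1 ha
      exact hsupp _ (Finset.mem_union_left _ (fst_mem_domF (Finset.mem_filter.1 hpr).1)))
    (by
      intro b hb
      obtain ⟨pr, hpr, rfl⟩ := Finset.mem_image.1 hb
      exact hsupp _ (Finset.mem_union_left _ (fst_mem_domF (Finset.mem_filter.1 hpr).1)))
    (by
      intro a ha b hb
      obtain ⟨pa, hpa, rfl⟩ := Finset.mem_image.1 ha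
      obtain ⟨pb, hpb, rfl⟩ := Finset.mem_image.1 hb
      obtain ⟨hpa, hpac⟩ := Finset.mem_filter.1 hpa
      obtain ⟨hpb, hpbc⟩ := Finset.mem_filter.1 hpb
      exact (lt_iff_lt_of_cmp_eq_cmp (hp pa hpa pb hpb)).2 (hpac.trans hpbc))
  refine ⟨y, hy1, hy2, mono_insert_of' hp ?_ ?_ ?_⟩
  · intro pr hpr he
    exact hcr (he ▸ snd_mem_ranF hpr)
  · intro pr hpr hc
    exact hy3 _ (Finset.mem_image_of_mem _ (Finset.mem_filter.2 ⟨hpr, hc⟩))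
  · intro pr hpr hc
    exact hy4 _ (Finset.mem_image_of_mem _ (Finset.mem_filter.2 ⟨hpr, hc⟩))

/-- Finite set of all points whose small `h`-orbit meets `T`. -/
noncomputable def orb (h : ℚ ≃o ℚ) (T : Finset ℚ) (n : ℕ) : Finset ℚ :=
  (Finset.Icc (-(n : ℤ)) (n : ℤ)).biUnion fun k => T.image fun t => (h ^ k).symm t

lemma not_mem_orb {y : ℚ} {T : Finset ℚ} {n : ℕ} (hy : y ∉ orb h T n)
    {k : ℤ} (hk1 : -(n : ℤ) ≤ k) (hk2 : k ≤ (n : ℤ)) : (h ^ k) y ∉ T := by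
  intro hmem
  apply hy
  refine Finset.mem_biUnion.2 ⟨k, Finset.mem_Icc.2 ⟨hk1, hk2⟩, ?_⟩
  refine Finset.mem_image.2 ⟨(h ^ k) y, hmem, ?_⟩
  simp

/-- Any finite monotone partial map extends to an order automorphism of `ℚ`. -/
lemma exists_extension (p : Finset (ℚ × ℚ)) (hp : Mono p) :
    ∃ g : ℚ ≃o ℚ, ∀ pr ∈ p, g pr.1 = pr.2 := by
  classical
  cases nonempty_encodable ℚ
  let seed : Order.PartialIso ℚ ℚ := ⟨p, hp⟩
  let to_cofinal : ℚ ⊕ ℚ → Order.Cofinal (Order.PartialIso ℚ ℚ) := fun q =>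
    Sum.recOn q (Order.PartialIso.definedAtLeft ℚ) (Order.PartialIso.definedAtRight ℚ)
  let our_ideal : Order.Ideal (Order.PartialIso ℚ ℚ) := Order.idealOfCofinals seed to_cofinal
  let F := fun a => Order.PartialIso.funOfIdeal a our_ideal
    (Order.cofinal_meets_idealOfCofinals _ to_cofinal (Sum.inl a))
  let G := fun b => Order.PartialIso.invOfIdeal b our_ideal
    (Order.cofinal_meets_idealOfCofinals _ to_cofinal (Sum.inr b))
  refine ⟨OrderIso.ofCmpEqCmp (fun a => (F a).val) (fun b => (G b).val) fun a b => ?_, ?_⟩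
  · rcases (F a).prop with ⟨f, hf, ha⟩
    rcases (G b).prop with ⟨g, hg, hb⟩
    rcases our_ideal.directed _ hf _ hg with ⟨m, _, fm, gm⟩
    exact m.prop (a, _) (fm ha) (_, b) (gm hb)
  · intro pr hpr
    rcases (F pr.1).prop with ⟨f, hf, ha⟩
    have hseed : seed ∈ our_ideal := Order.mem_idealOfCofinals seed to_cofinal
    rcases our_ideal.directed _ hf _ hseed with ⟨m, _, fm, sm⟩
    have := m.prop (pr.1, (F pr.1).val) (fm ha) (pr.1, pr.2) (sm hpr)
    have heq : cmp ((F pr.1).val) pr.2 = Ordering.eq := by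
      rw [← this, cmp_self_eq_eq]
    exact (cmp_eq_eq_iff _ _ |>.1 heq :)


/-- Evaluation of a word at the pair (h, g). -/
def evalL (h g : ℚ ≃o ℚ) (L : List (Fin 2 × Bool)) : ℚ ≃o ℚ :=
  (L.map fun u => cond u.2 (![h, g] u.1) (![h, g] u.1)⁻¹).prod

lemma evalL_nil (g : ℚ ≃o ℚ) : evalL h g [] = 1 := rfl

lemma evalL_cons (g : ℚ ≃o ℚ) (u : Fin 2 × Bool) (L : List (Fin 2 × Bool)) :
    evalL h g (u :: L) = (cond u.2 (![h, g] u.1) ((![h, g] u.1)⁻¹)) * evalL h g L := by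
  simp [evalL]

lemma main_induction (hh : h ≠ 1) (L : List (Fin 2 × Bool))
    (hred : ∀ (L₂ L₃ : List (Fin 2 × Bool)) (x : Fin 2) (b : Bool),
      L ≠ L₂ ++ (x, b) :: (x, !b) :: L₃) :
    ∀ (n : ℕ) (p : Finset (ℚ × ℚ)) (F : Finset ℚ), Mono p →
      (∀ x ∈ domF p ∪ ranF p, h x ≠ x) →
      ∃ (p' : Finset (ℚ × ℚ)) (q₀ c : ℚ),
        p ⊆ p' ∧ Mono p' ∧ (∀ x ∈ domF p' ∪ ranF p', h x ≠ x) ∧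
        h q₀ ≠ q₀ ∧ q₀ ∉ F ∧ h c ≠ c ∧
        (∀ k : ℤ, -(n : ℤ) ≤ k → k ≤ (n : ℤ) → (h ^ k) c ∉ F) ∧
        (∀ k : ℤ, -(n : ℤ) ≤ k → k ≤ (n : ℤ) → (h ^ k) c ∈ domF p' →
          ∃ (j : ℕ) (t : List (Fin 2 × Bool)) (bb : Bool),
            L = List.replicate j ((0 : Fin 2), bb) ++ ((1 : Fin 2), false) :: t ∧
            k = cond bb (-(j : ℤ)) (j : ℤ)) ∧
        (∀ k : ℤ, -(n : ℤ) ≤ k → k ≤ (n : ℤ) → (h ^ k) c ∈ ranF p' →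
          ∃ (j : ℕ) (t : List (Fin 2 × Bool)) (bb : Bool),
            L = List.replicate j ((0 : Fin 2), bb) ++ ((1 : Fin 2), true) :: t ∧
            k = cond bb (-(j : ℤ)) (j : ℤ)) ∧
        ((L = [] ∧ c = q₀) ∨
         (∀ k : ℤ, -(n : ℤ) ≤ k → k ≤ (n : ℤ) → (h ^ k) c ≠ q₀) ∨
         (∃ m : ℤ, c = (h ^ m) q₀ ∧ L ≠ [] ∧
            ((0 < m ∧ ∀ u ∈ L, u = ((0 : Fin 2), true)) ∨
             (m < 0 ∧ ∀ u ∈ L, u = ((0 : Fin 2), false))))) ∧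
        (∀ g : ℚ ≃o ℚ, (∀ pr ∈ p', g pr.1 = pr.2) → (evalL h g L) q₀ = c) := by
  induction L with
  | nil =>
    intro n p F hp hsupp
    obtain ⟨q₀, hq₀, hq₀E, -, -⟩ := exists_fresh hh ∅ ∅
      (orb h (domF p ∪ ranF p ∪ F) n) (by simp) (by simp) (by simp)
    have hq₀orb : ∀ k : ℤ, -(n : ℤ) ≤ k → k ≤ (n : ℤ) →
        (h ^ k) q₀ ∉ domF p ∧ (h ^ k) q₀ ∉ ranF p ∧ (h ^ k) q₀ ∉ F := by
      intro k hk1 hk2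
      have := not_mem_orb hq₀E hk1 hk2
      simp only [Finset.mem_union, not_or] at this
      tauto
    have hq₀F : q₀ ∉ F := by
      have := (hq₀orb 0 (by omega) (by omega)).2.2
      rwa [zpow_zero_apply] at this
    refine ⟨p, q₀, q₀, Finset.Subset.refl p, hp, hsupp, hq₀, hq₀F, hq₀, ?_, ?_, ?_, ?_, ?_⟩
    · exact fun k hk1 hk2 => (hq₀orb k hk1 hk2).2.2
    · exact fun k hk1 hk2 hmem => absurd hmem (hq₀orb k hk1 hk2).1
    · exact fun k hk1 hk2 hmem => absurd hmem (hq₀orb k hk1 hk2).2.1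
    · exact Or.inl ⟨rfl, rfl⟩
    · intro g hg; rfl
  | cons x L ih =>
    intro n p F hp hsupp
    have hredL : ∀ (L₂ L₃ : List (Fin 2 × Bool)) (y : Fin 2) (b : Bool),
        L ≠ L₂ ++ (y, b) :: (y, !b) :: L₃ := by
      intro L₂ L₃ y b he
      exact hred (x :: L₂) L₃ y b (by rw [List.cons_append, he])
    obtain ⟨p', q₀, c, hsub, hp', hsupp', hq₀, hq₀F, hc, hdA, hdB, hdC, hbr, heval⟩ :=
      ih hredL (n + 1) p F hp hsupp
    obtain ⟨i, s⟩ := x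
    have hi : i = 0 ∨ i = 1 := by fin_cases i <;> decide
    rcases hi with rfl | rfl
    · -- a-letter: apply h^(±1)
      obtain ⟨ε, hε, hcondeq⟩ : ∃ ε : ℤ, (ε = 1 ∧ s = true ∨ ε = -1 ∧ s = false) ∧
          ∀ g : ℚ ≃o ℚ,
            (cond s (![h, g] (0 : Fin 2)) ((![h, g] (0 : Fin 2))⁻¹)) = h ^ ε := by
        cases s
        · exact ⟨-1, Or.inr ⟨rfl, rfl⟩, fun g => by simp [zpow_neg_one]⟩
        · exact ⟨1, Or.inl ⟨rfl, rfl⟩, fun g => by simp⟩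
      have hbound : ∀ k : ℤ, -(n : ℤ) ≤ k → k ≤ (n : ℤ) →
          -((n : ℤ) + 1) ≤ k + ε ∧ k + ε ≤ (n : ℤ) + 1 := by
        rcases hε with ⟨rfl, -⟩ | ⟨rfl, -⟩ <;> intro k hk1 hk2 <;> omega
      have hcast : ((n + 1 : ℕ) : ℤ) = (n : ℤ) + 1 := by push_cast; ring
      refine ⟨p', q₀, (h ^ ε) c, hsub, hp', hsupp', hq₀, hq₀F,
        zpow_mem_supp hc ε, ?_, ?_, ?_, ?_, ?_⟩
      · intro k hk1 hk2
        rw [← zpow_apply_add]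
        exact hdA (k + ε) (by rw [hcast]; exact (hbound k hk1 hk2).1)
          (by rw [hcast]; exact (hbound k hk1 hk2).2)
      · -- dB
        intro k hk1 hk2 hmem
        rw [← zpow_apply_add] at hmem
        obtain ⟨j, t, bb, hLrep, hkval⟩ := hdB (k + ε)
          (by rw [hcast]; exact (hbound k hk1 hk2).1)
          (by rw [hcast]; exact (hbound k hk1 hk2).2) hmem
        cases j with
        | zero =>
          refine ⟨1, t, s, ?_, ?_⟩
          · simp only [List.replicate_zero, List.nil_append] at hLrep
            simp [hLrep]
          · rcases hε with ⟨rfl, rfl⟩ | ⟨rfl, rfl⟩ <;> cases bb <;>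
              simp only [Nat.cast_zero, cond] at hkval ⊢ <;> omega
        | succ j' =>
          have hbbs : bb = s := by
            by_contra hbb
            apply hred [] (List.replicate j' ((0 : Fin 2), bb) ++ ((1 : Fin 2), false) :: t) 0 s
            rw [List.replicate_succ, List.cons_append] at hLrep
            have : bb = !s := by
              cases bb <;> cases s <;> first | rfl | exact absurd rfl hbb
            rw [List.nil_append, hLrep, this]
          subst hbbs
          refine ⟨j' + 1 + 1, t, bb, ?_, ?_⟩
          · rw [List.replicate_succ, List.cons_append, ← hLrep]
          · rcases hε with ⟨rfl, rfl⟩ | ⟨rfl, rfl⟩ <;>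
              simp only [cond] at hkval ⊢ <;> push_cast at hkval ⊢ <;> omega
      · -- dC
        intro k hk1 hk2 hmem
        rw [← zpow_apply_add] at hmem
        obtain ⟨j, t, bb, hLrep, hkval⟩ := hdC (k + ε)
          (by rw [hcast]; exact (hbound k hk1 hk2).1)
          (by rw [hcast]; exact (hbound k hk1 hk2).2) hmem
        cases j with
        | zero =>
          refine ⟨1, t, s, ?_, ?_⟩
          · simp only [List.replicate_zero, List.nil_append] at hLrep
            simp [hLrep]
          · rcases hε with ⟨rfl, rfl⟩ | ⟨rfl, rfl⟩ <;> cases bb <;>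
              simp only [Nat.cast_zero, cond] at hkval ⊢ <;> omega
        | succ j' =>
          have hbbs : bb = s := by
            by_contra hbb
            apply hred [] (List.replicate j' ((0 : Fin 2), bb) ++ ((1 : Fin 2), true) :: t) 0 s
            rw [List.replicate_succ, List.cons_append] at hLrep
            have : bb = !s := by
              cases bb <;> cases s <;> first | rfl | exact absurd rfl hbb
            rw [List.nil_append, hLrep, this]
          subst hbbs
          refine ⟨j' + 1 + 1, t, bb, ?_, ?_⟩
          · rw [List.replicate_succ, List.cons_append, ← hLrep]
          · rcases hε with ⟨rfl, rfl⟩ | ⟨rfl, rfl⟩ <;>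
              simp only [cond] at hkval ⊢ <;> push_cast at hkval ⊢ <;> omega
      · -- branch
        rcases hbr with ⟨hL0, hcq⟩ | he1 | ⟨m, hcm, hLne, hsign⟩
        · refine Or.inr (Or.inr ⟨ε, by rw [hcq], List.cons_ne_nil _ _, ?_⟩)
          rcases hε with ⟨rfl, rfl⟩ | ⟨rfl, rfl⟩
          · exact Or.inl ⟨by omega, by intro u hu; subst hL0; simpa using hu⟩
          · exact Or.inr ⟨by omega, by intro u hu; subst hL0; simpa using hu⟩
        · refine Or.inr (Or.inl ?_)
          intro k hk1 hk2
          rw [← zpow_apply_add]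
          exact he1 (k + ε) (by rw [hcast]; exact (hbound k hk1 hk2).1)
            (by rw [hcast]; exact (hbound k hk1 hk2).2)
        · refine Or.inr (Or.inr ⟨ε + m, ?_, List.cons_ne_nil _ _, ?_⟩)
          · rw [hcm, ← zpow_apply_add]
          · obtain ⟨u₀, L', rfl⟩ := List.exists_cons_of_ne_nil hLne
            rcases hsign with ⟨hm, hall⟩ | ⟨hm, hall⟩ <;>
              rcases hε with ⟨rfl, rfl⟩ | ⟨rfl, rfl⟩
            · exact Or.inl ⟨by omega, by
                intro u hu
                rcases List.mem_cons.1 hu with rfl | hu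
                · rfl
                · exact hall u hu⟩
            · -- s = false but L starts with (0, true): contradiction with reducedness
              exfalso
              have hu₀ : u₀ = ((0 : Fin 2), true) := hall u₀ (by simp)
              exact hred [] L' 0 false (by rw [List.nil_append, hu₀]; rfl)
            · exfalso
              have hu₀ : u₀ = ((0 : Fin 2), false) := hall u₀ (by simp)
              exact hred [] L' 0 true (by rw [List.nil_append, hu₀]; rfl)
            · exact Or.inr ⟨by omega, by
                intro u hu
                rcases List.mem_cons.1 hu with rfl | hu
                · rfl
                · exact hall u hu⟩
      · -- evaluation
        intro g hg
        rw [evalL_cons, mul_apply, heval g hg, hcondeq g]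
    · -- b-letter
      cases s
      · -- b⁻¹ : apply g⁻¹, extend on the left
        have hcr : c ∉ ranF p' := by
          intro hmem
          obtain ⟨j, t, bb, hL, hk⟩ := hdC 0 (by omega) (by omega)
            (by rwa [zpow_zero_apply])
          have hj : j = 0 := by cases bb <;> simp only [cond] at hk <;> omega
          subst hj
          simp only [List.replicate_zero, List.nil_append] at hL
          exact hred [] t 1 false (by rw [List.nil_append, hL]; rfl)
        obtain ⟨y, hy, hyE, hyM⟩ := extend_left hh p' hp' hsupp' hcr
          (orb h (domF p' ∪ ranF p' ∪ F ∪ insert q₀ {c}) n)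
        have hfresh : ∀ k : ℤ, -(n : ℤ) ≤ k → k ≤ (n : ℤ) →
            (h ^ k) y ∉ domF p' ∧ (h ^ k) y ∉ ranF p' ∧ (h ^ k) y ∉ F ∧
              (h ^ k) y ≠ q₀ ∧ (h ^ k) y ≠ c := by
          intro k hk1 hk2
          have := not_mem_orb hyE hk1 hk2
          simp only [Finset.mem_union, Finset.mem_insert, Finset.mem_singleton, not_or] at this
          exact ⟨this.1.1.1, this.1.1.2, this.1.2, this.2.1, this.2.2⟩
        refine ⟨insert (y, c) p', q₀, y, hsub.trans (Finset.subset_insert _ _), hyM, ?_,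
          hq₀, hq₀F, hy, ?_, ?_, ?_, ?_, ?_⟩
        · intro z hz
          rw [domF_insert, ranF_insert, Finset.mem_union, Finset.mem_insert,
            Finset.mem_insert] at hz
          rcases hz with (rfl | hz) | (rfl | hz)
          · exact hy
          · exact hsupp' z (Finset.mem_union_left _ hz)
          · exact hc
          · exact hsupp' z (Finset.mem_union_right _ hz)
        · exact fun k hk1 hk2 => (hfresh k hk1 hk2).2.2.1
        · -- dB
          intro k hk1 hk2 hmem
          rw [domF_insert, Finset.mem_insert] at hmem
          rcases hmem with heq | hmem
          · have hk0 : k = 0 := by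
              by_contra hk0
              exact zpow_apply_ne_self hy hk0 heq
            subst hk0
            exact ⟨0, L, true, rfl, rfl⟩
          · exact absurd hmem (hfresh k hk1 hk2).1
        · -- dC
          intro k hk1 hk2 hmem
          rw [ranF_insert, Finset.mem_insert] at hmem
          rcases hmem with heq | hmem
          · exact absurd heq (hfresh k hk1 hk2).2.2.2.2
          · exact absurd hmem (hfresh k hk1 hk2).2.1
        · exact Or.inr (Or.inl fun k hk1 hk2 => (hfresh k hk1 hk2).2.2.2.1)
        · intro g hg
          have h1 : evalL h g L q₀ = c :=
            heval g fun pr hpr => hg pr (Finset.mem_insert_of_mem hpr)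
          have h2 : g y = c := hg (y, c) (Finset.mem_insert_self _ _)
          rw [evalL_cons, mul_apply, h1]
          have : (cond false (![h, g] (1 : Fin 2)) ((![h, g] (1 : Fin 2))⁻¹)) = g⁻¹ := by
            simp
          rw [this, ← h2]
          change (g⁻¹ * g) y = y
          rw [inv_mul_cancel]
          rfl
      · -- b : apply g, extend on the right
        have hcd : c ∉ domF p' := by
          intro hmem
          obtain ⟨j, t, bb, hL, hk⟩ := hdB 0 (by omega) (by omega)
            (by rwa [zpow_zero_apply])
          have hj : j = 0 := by cases bb <;> simp only [cond] at hk <;> omega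
          subst hj
          simp only [List.replicate_zero, List.nil_append] at hL
          exact hred [] t 1 true (by rw [List.nil_append, hL]; rfl)
        obtain ⟨y, hy, hyE, hyM⟩ := extend_right hh p' hp' hsupp' hcd
          (orb h (domF p' ∪ ranF p' ∪ F ∪ insert q₀ {c}) n)
        have hfresh : ∀ k : ℤ, -(n : ℤ) ≤ k → k ≤ (n : ℤ) →
            (h ^ k) y ∉ domF p' ∧ (h ^ k) y ∉ ranF p' ∧ (h ^ k) y ∉ F ∧
              (h ^ k) y ≠ q₀ ∧ (h ^ k) y ≠ c := by
          intro k hk1 hk2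
          have := not_mem_orb hyE hk1 hk2
          simp only [Finset.mem_union, Finset.mem_insert, Finset.mem_singleton, not_or] at this
          exact ⟨this.1.1.1, this.1.1.2, this.1.2, this.2.1, this.2.2⟩
        refine ⟨insert (c, y) p', q₀, y, hsub.trans (Finset.subset_insert _ _), hyM, ?_,
          hq₀, hq₀F, hy, ?_, ?_, ?_, ?_, ?_⟩
        · intro z hz
          rw [domF_insert, ranF_insert, Finset.mem_union, Finset.mem_insert,
            Finset.mem_insert] at hz
          rcases hz with (rfl | hz) | (rfl | hz)
          · exact hc
          · exact hsupp' z (Finset.mem_union_left _ hz)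
          · exact hy
          · exact hsupp' z (Finset.mem_union_right _ hz)
        · exact fun k hk1 hk2 => (hfresh k hk1 hk2).2.2.1
        · -- dB
          intro k hk1 hk2 hmem
          rw [domF_insert, Finset.mem_insert] at hmem
          rcases hmem with heq | hmem
          · exact absurd heq (hfresh k hk1 hk2).2.2.2.2
          · exact absurd hmem (hfresh k hk1 hk2).1
        · -- dC
          intro k hk1 hk2 hmem
          rw [ranF_insert, Finset.mem_insert] at hmem
          rcases hmem with heq | hmem
          · have hk0 : k = 0 := by
              by_contra hk0
              exact zpow_apply_ne_self hy hk0 heq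
            subst hk0
            exact ⟨0, L, true, rfl, rfl⟩
          · exact absurd hmem (hfresh k hk1 hk2).2.1
        · exact Or.inr (Or.inl fun k hk1 hk2 => (hfresh k hk1 hk2).2.2.2.1)
        · intro g hg
          have h1 : evalL h g L q₀ = c :=
            heval g fun pr hpr => hg pr (Finset.mem_insert_of_mem hpr)
          have h2 : g c = y := hg (c, y) (Finset.mem_insert_self _ _)
          rw [evalL_cons, mul_apply, h1]
          simpa using h2

lemma no_cancel_toWord (w : FreeGroup (Fin 2)) :
    ∀ (L₂ L₃ : List (Fin 2 × Bool)) (x : Fin 2) (b : Bool),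
      w.toWord ≠ L₂ ++ (x, b) :: (x, !b) :: L₃ := by
  intro L₂ L₃ x b he
  exact FreeGroup.reduce.not (α := Fin 2) (p := False) (L₁ := w.toWord)
    (by rw [FreeGroup.reduce_toWord]; exact he)

lemma finset_step (hh : h ≠ 1) (S : Finset (FreeGroup (Fin 2))) :
    (∀ w ∈ S, w ≠ 1) →
      ∀ (p : Finset (ℚ × ℚ)), Mono p → (∀ x ∈ domF p ∪ ranF p, h x ≠ x) →
      ∃ p', p ⊆ p' ∧ Mono p' ∧ (∀ x ∈ domF p' ∪ ranF p', h x ≠ x) ∧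
        ∀ w ∈ S, ∀ g : ℚ ≃o ℚ, (∀ pr ∈ p', g pr.1 = pr.2) →
          FreeGroup.lift ![h, g] w ≠ 1 := by
  classical
  induction S using Finset.induction_on with
  | empty =>
    intro _ p hp hs
    exact ⟨p, Finset.Subset.refl p, hp, hs, by simp⟩
  | @insert w T hwT ih =>
    intro hST p hp hs
    obtain ⟨p₁, hsub₁, hp₁, hs₁, hold⟩ :=
      ih (fun v hv => hST v (Finset.mem_insert_of_mem hv)) p hp hs
    have hw1 : w ≠ 1 := hST w (Finset.mem_insert_self _ _)
    obtain ⟨p₂, q₀, c, hsub₂, hp₂, hs₂, hq₀, -, hc, -, -, -, hbr, heval⟩ :=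
      main_induction hh w.toWord (no_cancel_toWord w) 0 p₁ ∅ hp₁ hs₁
    have hLne : w.toWord ≠ [] := fun he => hw1 (FreeGroup.toWord_eq_nil_iff.1 he)
    have hcq : c ≠ q₀ := by
      rcases hbr with ⟨hL, -⟩ | he1 | ⟨m, hcm, -, hsign⟩
      · exact absurd hL hLne
      · have := he1 0 (by omega) (by omega)
        rwa [zpow_zero_apply] at this
      · have hm : m ≠ 0 := by rcases hsign with ⟨hm, -⟩ | ⟨hm, -⟩ <;> omega
        rw [hcm]
        exact zpow_apply_ne_self hq₀ hm
    refine ⟨p₂, hsub₁.trans hsub₂, hp₂, hs₂, ?_⟩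
    intro v hv g hg
    rcases Finset.mem_insert.1 hv with rfl | hv
    · intro he1
      have h2 := heval g hg
      have h3 : FreeGroup.lift ![h, g] v = evalL h g v.toWord := by
        conv_lhs => rw [← FreeGroup.mk_toWord (x := v)]
        rfl
      have h4 : c = q₀ := by
        rw [← h2, ← h3, he1]
        rfl
      exact hcq h4
    · exact hold v hv g fun pr hpr => hg pr (hsub₂ hpr)

end OrderAutQFree

/-- **Statement 10.** For every nontrivial order-automorphism `h` of `(ℚ, <)` and every finite
set `S` of nontrivial elements of the free group on two generators `a, b`, there is an
order-automorphism `g` of `ℚ` such that the homomorphism `F₂ → A(ℚ)`, `a ↦ h`, `b ↦ g`, sends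
no element of `S` to `1`. (Hence `{h, g}` is a free basis of a free subgroup of rank 2 in a
suitable limit group over `A(ℚ)`.) -/
theorem exists_free_pair_in_orderAutQ
    (h : ℚ ≃o ℚ) (hh : h ≠ 1)
    (S : Finset (FreeGroup (Fin 2))) (hS : ∀ w ∈ S, w ≠ 1) :
    ∃ g : ℚ ≃o ℚ, ∀ w ∈ S, FreeGroup.lift ![h, g] w ≠ 1 := by
  classical
  obtain ⟨p', -, hp', -, hall⟩ := OrderAutQFree.finset_step hh S hS ∅
    (by intro a ha; exact absurd ha (Finset.notMem_empty _))
    (by intro x hx; simp [OrderAutQFree.domF, OrderAutQFree.ranF] at hx)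
  obtain ⟨g, hg⟩ := OrderAutQFree.exists_extension p' hp'
  exact ⟨g, fun w hw => hall w hw g hg⟩
end
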